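/- arXiv:2302.00645 — 10 statements merged into one kernel-verified Lean document; each statement's English description precedes it below -/
import Mathlib

section
/- For all n ≥ 1, the number of partitions with perimeter n and all parts odd equals the number of partitions with perimeter n and distinct parts. -/
/-- A partition: weakly decreasing finite sequence of positive integers. -/
def IsPartition (l : List ℕ) : Prop := (∀ x ∈ l, 0 < x) ∧ l.Pairwise (· ≥ ·)

/-- The perimeter of a partition: largest part plus number of parts minus one. -/
def perimeter (l : List ℕ) : ℕ := l.headI + l.length - 1

namespace StraubAux


/-- Rebuild a strictly decreasing positive list from its "gap" encoding. -/
def buildD : List ℕ → List ℕ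
  | [] => []
  | a :: rest => (a + 1 + rest.sum + rest.length) :: buildD rest

def gapsD : List ℕ → List ℕ
  | [] => []
  | [a] => [a - 1]
  | a :: b :: rest => (a - b - 1) :: gapsD (b :: rest)

lemma buildD_length (g : List ℕ) : (buildD g).length = g.length := by
  induction g with
  | nil => rfl
  | cons a rest ih => simp [buildD, ih]

lemma buildD_headI (g : List ℕ) : (buildD g).headI = g.sum + g.length := by
  cases g with
  | nil => simp [buildD]
  | cons a rest => simp [buildD]; ring

lemma buildD_le {g : List ℕ} {x : ℕ} (hx : x ∈ buildD g) : x ≤ g.sum + g.length := by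
  induction g with
  | nil => simp [buildD] at hx
  | cons a rest ih =>
    simp only [buildD, List.mem_cons] at hx
    rcases hx with rfl | hx
    · simp; omega
    · have := ih hx
      simp; omega

lemma buildD_pos {g : List ℕ} {x : ℕ} (hx : x ∈ buildD g) : 0 < x := by
  induction g with
  | nil => simp [buildD] at hx
  | cons a rest ih =>
    simp only [buildD, List.mem_cons] at hx
    rcases hx with rfl | hx
    · omega
    · exact ih hx

lemma buildD_sorted (g : List ℕ) : (buildD g).Pairwise (· > ·) := by
  induction g with
  | nil => simp [buildD]
  | cons a rest ih =>
    rw [buildD, List.pairwise_cons]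
    refine ⟨fun b hb => ?_, ih⟩
    have := buildD_le hb
    omega

lemma gapsD_buildD (g : List ℕ) : gapsD (buildD g) = g := by
  induction g with
  | nil => rfl
  | cons a rest ih =>
    cases rest with
    | nil => simp [buildD, gapsD]
    | cons b r' =>
      rw [buildD]
      rw [show buildD (b :: r') = (b + 1 + r'.sum + r'.length) :: buildD r' from rfl]
      rw [gapsD]
      rw [← show buildD (b :: r') = (b + 1 + r'.sum + r'.length) :: buildD r' from rfl]
      rw [ih]
      congr 1
      simp [List.sum_cons]
      omega

lemma buildD_gapsD {l : List ℕ} (hs : l.Pairwise (· > ·)) (hp : ∀ x ∈ l, 0 < x) :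
    buildD (gapsD l) = l := by
  induction l with
  | nil => rfl
  | cons a t ih =>
    cases t with
    | nil =>
      have : 0 < a := hp a (by simp)
      simp [gapsD, buildD]
      omega
    | cons b r =>
      rw [List.pairwise_cons] at hs
      have hab : b < a := hs.1 b (by simp)
      have ih' := ih hs.2 (fun x hx => hp x (List.mem_cons_of_mem _ hx))
      rw [gapsD, buildD, ih']
      congr 1
      have hhead := buildD_headI (gapsD (b :: r))
      rw [ih'] at hhead
      simp at hhead
      omega

/-- Rebuild a weakly decreasing list of odd numbers from its multiplicity encoding
(not including the leading maximal part). -/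
def buildO : List ℕ → List ℕ
  | [] => []
  | a :: rest => List.replicate a (2 * rest.length + 1) ++ buildO rest

def gapsO : ℕ → List ℕ → List ℕ
  | 0, _ => []
  | m+1, l => l.count (2*m+1) :: gapsO m l

lemma buildO_length (g : List ℕ) : (buildO g).length = g.sum := by
  induction g with
  | nil => rfl
  | cons a rest ih => simp [buildO, ih]

lemma buildO_mem {g : List ℕ} {x : ℕ} (hx : x ∈ buildO g) :
    ∃ j, j < g.length ∧ x = 2 * j + 1 := by
  induction g with
  | nil => simp [buildO] at hx
  | cons a rest ih =>
    simp only [buildO, List.mem_append, List.mem_replicate] at hx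
    rcases hx with ⟨-, rfl⟩ | hx
    · exact ⟨rest.length, by simp, rfl⟩
    · obtain ⟨j, hj, rfl⟩ := ih hx
      exact ⟨j, by simp; omega, rfl⟩

lemma buildO_sorted (g : List ℕ) : (buildO g).Pairwise (· ≥ ·) := by
  induction g with
  | nil => simp [buildO]
  | cons a rest ih =>
    rw [buildO, List.pairwise_append]
    refine ⟨List.pairwise_replicate.2 (by simp), ih, ?_⟩
    intro x hx y hy
    obtain ⟨-, rfl⟩ := List.mem_replicate.1 hx
    obtain ⟨j, hj, rfl⟩ := buildO_mem hy
    omega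

lemma gapsO_length (m : ℕ) (l : List ℕ) : (gapsO m l).length = m := by
  induction m generalizing l with
  | zero => rfl
  | succ m ih => simp [gapsO, ih]

lemma gapsO_append_big {s : List ℕ} (m : ℕ) (t : List ℕ)
    (hs : ∀ x ∈ s, 2 * m - 1 < x) : gapsO m (s ++ t) = gapsO m t := by
  induction m with
  | zero => rfl
  | succ m ih =>
    rw [gapsO, gapsO, List.count_append]
    have h0 : s.count (2*m+1) = 0 := by
      rw [List.count_eq_zero]
      intro h
      have := hs _ h
      omega
    rw [h0, ih (fun x hx => by have := hs x hx; omega)]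
    simp

lemma gapsO_buildO (g : List ℕ) : gapsO g.length (buildO g) = g := by
  induction g with
  | nil => rfl
  | cons a rest ih =>
    rw [buildO, List.length_cons, gapsO, List.count_append]
    have h1 : (List.replicate a (2 * rest.length + 1)).count (2 * rest.length + 1) = a := by
      simp
    have h2 : (buildO rest).count (2 * rest.length + 1) = 0 := by
      rw [List.count_eq_zero]
      intro h
      obtain ⟨j, hj, hx⟩ := buildO_mem h
      omega
    rw [h1, h2, gapsO_append_big rest.length (buildO rest)
      (fun x hx => by obtain ⟨-, rfl⟩ := List.mem_replicate.1 hx; omega), ih]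
    simp

lemma sorted_max_prefix {t : List ℕ} (v : ℕ) (hs : t.Pairwise (· ≥ ·))
    (hle : ∀ x ∈ t, x ≤ v) :
    ∃ c r, t = List.replicate c v ++ r ∧ r.Pairwise (· ≥ ·) ∧ (∀ x ∈ r, x < v) ∧
      t.count v = c := by
  induction t with
  | nil => exact ⟨0, [], by simp, by simp, by simp, by simp⟩
  | cons x t' ih =>
    rw [List.pairwise_cons] at hs
    rcases eq_or_lt_of_le (hle x (by simp)) with rfl | hlt
    · obtain ⟨c, r, h1, h2, h3, h4⟩ := ih hs.2 (fun y hy => hle y (by simp [hy]))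
      refine ⟨c + 1, r, ?_, h2, h3, ?_⟩
      · rw [List.replicate_succ, List.cons_append, h1]
      · have hr0 : r.count x = 0 := by
          rw [List.count_eq_zero]
          intro h
          exact absurd (h3 x h) (lt_irrefl x)
        simp [h1, List.count_append, hr0]
    · refine ⟨0, x :: t', by simp, List.pairwise_cons.2 hs, ?_, ?_⟩
      · intro y hy
        rcases List.mem_cons.1 hy with rfl | hy
        · exact hlt
        · exact lt_of_le_of_lt (hs.1 y hy) hlt
      · rw [List.count_eq_zero]
        intro h
        rcases List.mem_cons.1 h with h' | h'
        · omega
        · have := hs.1 _ h'; omega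

lemma buildO_gapsO (m : ℕ) (t : List ℕ) (hs : t.Pairwise (· ≥ ·))
    (hodd : ∀ x ∈ t, Odd x) (hle : ∀ x ∈ t, x ≤ 2 * m - 1) :
    buildO (gapsO m t) = t := by
  induction m generalizing t with
  | zero =>
    have : t = [] := by
      cases t with
      | nil => rfl
      | cons x t' =>
        have h1 := hodd x (by simp)
        have h2 := hle x (by simp)
        obtain ⟨i, rfl⟩ := h1
        omega
    simp [this, gapsO, buildO]
  | succ m ih =>
    obtain ⟨c, r, h1, h2, h3, h4⟩ := sorted_max_prefix (2*m+1) hs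
      (fun x hx => by have := hle x hx; omega)
    rw [gapsO, h4]
    have hgg : gapsO m t = gapsO m r := by
      rw [h1]
      exact gapsO_append_big m r
        (fun x hx => by obtain ⟨-, rfl⟩ := List.mem_replicate.1 hx; omega)
    rw [hgg, buildO, gapsO_length]
    have hr : buildO (gapsO m r) = r := by
      refine ih r h2 (fun x hx => hodd x (by rw [h1]; simp [hx])) ?_
      intro x hx
      have hxlt := h3 x hx
      obtain ⟨i, rfl⟩ := hodd x (by rw [h1]; simp [hx])
      omega
    rw [hr, ← h1]


lemma perim_ne_nil {l : List ℕ} {n : ℕ} (hn : 1 ≤ n) (hper : perimeter l = n) :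
    l ≠ [] := by
  intro h
  subst h
  simp [perimeter] at hper
  omega

lemma card_eqB (n : ℕ) (hn : 1 ≤ n) :
    Nat.card {l : List ℕ // IsPartition l ∧ perimeter l = n ∧ l.Nodup} =
    Nat.card {g : List ℕ // g ≠ [] ∧ 2 * g.length + g.sum = n + 1} := by
  apply Nat.card_congr
  refine ⟨fun l => ⟨gapsD l.1, ?_⟩, fun g => ⟨buildD g.1, ?_⟩, ?_, ?_⟩
  · obtain ⟨l, ⟨hpos, hsort⟩, hper, hnd⟩ := l
    dsimp only
    have hstr : l.Pairwise (· > ·) := (hsort.and hnd).imp (fun h => by omega)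
    have rt : buildD (gapsD l) = l := buildD_gapsD hstr hpos
    have hne : l ≠ [] := perim_ne_nil hn hper
    have hlen : (gapsD l).length = l.length := by
      have := buildD_length (gapsD l); rw [rt] at this; omega
    have hhead : (gapsD l).sum + (gapsD l).length = l.headI := by
      have := buildD_headI (gapsD l); rw [rt] at this; omega
    have hlp : 0 < l.length := List.length_pos_iff.2 hne
    constructor
    · intro h
      rw [h] at hlen
      simp at hlen
      omega
    · simp only [perimeter] at hper
      omega
  · obtain ⟨g, hne, hsum⟩ := g
    dsimp only
    have hstr := buildD_sorted g
    have hlp : 0 < g.length := List.length_pos_iff.2 hne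
    refine ⟨⟨fun x hx => buildD_pos hx, hstr.imp (fun h => le_of_lt h)⟩, ?_, ?_⟩
    · simp only [perimeter, buildD_headI, buildD_length]
      omega
    · exact hstr.imp (fun h => by omega)
  · intro l
    obtain ⟨l, ⟨hpos, hsort⟩, hper, hnd⟩ := l
    have hstr : l.Pairwise (· > ·) := (hsort.and hnd).imp (fun h => by omega)
    apply Subtype.ext
    dsimp only
    exact buildD_gapsD hstr hpos
  · intro g
    exact Subtype.ext (gapsD_buildD g.1)

lemma card_eqA (n : ℕ) (hn : 1 ≤ n) :
    Nat.card {l : List ℕ // IsPartition l ∧ perimeter l = n ∧ ∀ x ∈ l, Odd x} =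
    Nat.card {g : List ℕ // g ≠ [] ∧ 2 * g.length + g.sum = n + 1} := by
  apply Nat.card_congr
  refine ⟨fun l => ⟨gapsO ((l.1.headI + 1) / 2) l.1.tail, ?_⟩,
    fun g => ⟨(2 * g.1.length - 1) :: buildO g.1, ?_⟩, ?_, ?_⟩
  · obtain ⟨l, ⟨hpos, hsort⟩, hper, hodd⟩ := l
    dsimp only
    have hne : l ≠ [] := perim_ne_nil hn hper
    obtain ⟨h, t, rfl⟩ := List.exists_cons_of_ne_nil hne
    have hh : h % 2 = 1 := Nat.odd_iff.1 (hodd h (by simp))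
    rw [List.pairwise_cons] at hsort
    simp only [List.headI_cons, List.tail_cons]
    set m := (h + 1) / 2 with hm
    have hm1 : h = 2 * m - 1 ∧ 1 ≤ m := by omega
    have rtO : buildO (gapsO m t) = t := by
      refine buildO_gapsO m t hsort.2 (fun x hx => hodd x (by simp [hx])) ?_
      intro x hx
      have := hsort.1 x hx
      omega
    have hlen : (gapsO m t).length = m := gapsO_length m t
    have hsum : (gapsO m t).sum = t.length := by
      have := buildO_length (gapsO m t); rw [rtO] at this; omega
    simp only [perimeter, List.headI_cons, List.length_cons] at hper
    constructor
    · intro hc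
      rw [hc] at hlen
      simp at hlen
      omega
    · omega
  · obtain ⟨g, hne, hsum⟩ := g
    dsimp only
    have hlp : 0 < g.length := List.length_pos_iff.2 hne
    refine ⟨⟨?_, ?_⟩, ?_, ?_⟩
    · intro x hx
      rcases List.mem_cons.1 hx with rfl | hx
      · omega
      · obtain ⟨j, hj, rfl⟩ := buildO_mem hx
        omega
    · rw [List.pairwise_cons]
      refine ⟨fun b hb => ?_, buildO_sorted g⟩
      obtain ⟨j, hj, rfl⟩ := buildO_mem hb
      omega
    · simp only [perimeter, List.headI_cons, List.length_cons, buildO_length]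
      omega
    · intro x hx
      rcases List.mem_cons.1 hx with rfl | hx
      · exact Nat.odd_iff.2 (by omega)
      · obtain ⟨j, hj, rfl⟩ := buildO_mem hx
        exact Nat.odd_iff.2 (by omega)
  · intro l
    obtain ⟨l, ⟨hpos, hsort⟩, hper, hodd⟩ := l
    have hne : l ≠ [] := perim_ne_nil hn hper
    obtain ⟨h, t, rfl⟩ := List.exists_cons_of_ne_nil hne
    have hh : h % 2 = 1 := Nat.odd_iff.1 (hodd h (by simp))
    rw [List.pairwise_cons] at hsort
    apply Subtype.ext
    dsimp only
    simp only [List.headI_cons, List.tail_cons]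
    set m := (h + 1) / 2 with hm
    have rtO : buildO (gapsO m t) = t := by
      refine buildO_gapsO m t hsort.2 (fun x hx => hodd x (by simp [hx])) ?_
      intro x hx
      have := hsort.1 x hx
      omega
    have hlen : (gapsO m t).length = m := gapsO_length m t
    rw [hlen, rtO]
    congr 1
    omega
  · intro g
    obtain ⟨g, hne, hsum⟩ := g
    have hlp : 0 < g.length := List.length_pos_iff.2 hne
    apply Subtype.ext
    dsimp only
    simp only [List.headI_cons, List.tail_cons]
    have : (2 * g.length - 1 + 1) / 2 = g.length := by omega
    rw [this, gapsO_buildO]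


end StraubAux

theorem straub (n : ℕ) (hn : 1 ≤ n) :
    Nat.card {l : List ℕ // IsPartition l ∧ perimeter l = n ∧ ∀ x ∈ l, Odd x} =
    Nat.card {l : List ℕ // IsPartition l ∧ perimeter l = n ∧ l.Nodup} := by
  rw [StraubAux.card_eqA n hn, StraubAux.card_eqB n hn]
end

section
/- For all m ≥ 2 and n ≥ 1, the number of partitions of n with no part divisible by m equals the number of partitions of n in which no part repeats m or more times. -/
section Aux
variable {m : ℕ} (hm : 2 ≤ m)

lemma gl_decomp {b : ℕ} : b / m ^ m.maxPowDiv b * m ^ m.maxPowDiv b = b :=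
  Nat.div_mul_cancel (Nat.maxPowDiv.pow_dvd (p := m) (n := b))

include hm

lemma gl_not_dvd {b : ℕ} (hb : 0 < b) : ¬ m ∣ b / m ^ m.maxPowDiv b := by
  rintro ⟨c, hc⟩
  have h1 : m ^ (m.maxPowDiv b + 1) ∣ b := by
    refine ⟨c, ?_⟩
    calc b = b / m ^ m.maxPowDiv b * m ^ m.maxPowDiv b := (gl_decomp).symm
    _ = m ^ (m.maxPowDiv b + 1) * c := by rw [hc]; ring
  have : m.maxPowDiv b + 1 ≤ m.maxPowDiv b := (Nat.pow_dvd_iff_le_padicValNat (p := m) (n := b) (by omega) (by omega)).mp h1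
  omega

lemma gl_q_pos {b : ℕ} (hb : 0 < b) : 0 < b / m ^ m.maxPowDiv b := by
  rcases Nat.eq_zero_or_pos (b / m ^ m.maxPowDiv b) with h | h
  · have := gl_decomp (m := m) (b := b); rw [h] at this; omega
  · exact h

lemma gl_v_eq {a : ℕ} (ha : ¬ m ∣ a) (i : ℕ) : m.maxPowDiv (a * m ^ i) = i := by
  have ha0 : 0 < a := by
    rcases Nat.eq_zero_or_pos a with h | h
    · exact absurd (h ▸ dvd_zero m) ha
    · exact h
  have hva : m.maxPowDiv a = 0 := by
    by_contra h
    exact ha (dvd_trans (dvd_pow_self m h) (Nat.maxPowDiv.pow_dvd (p := m) (n := a)))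
  rw [mul_comm]
  have h := Nat.maxPowDiv.base_pow_mul (p := m) (n := a) (by omega) (by omega) i
  exact h.trans (by rw [show padicValNat m a = 0 from hva, zero_add])

lemma gl_q_eq {a : ℕ} (ha : ¬ m ∣ a) (i : ℕ) : (a * m ^ i) / m ^ m.maxPowDiv (a * m ^ i) = a := by
  rw [gl_v_eq hm ha i, Nat.mul_div_cancel _ (pow_pos (by omega) i)]

lemma gl_eq_iff {a b : ℕ} (ha : ¬ m ∣ a) (hb : 0 < b) (i : ℕ) :
    a * m ^ i = b ↔ (b / m ^ m.maxPowDiv b = a ∧ m.maxPowDiv b = i) := by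
  constructor
  · rintro rfl; exact ⟨gl_q_eq hm ha i, gl_v_eq hm ha i⟩
  · rintro ⟨rfl, rfl⟩; exact gl_decomp

end Aux

set_option linter.unusedSectionVars false

/-- Glaisher's map: each part `b = a * m^i` (with `¬ m ∣ a`) becomes `m^i` copies of `a`. -/
def psi (m : ℕ) (t : Multiset ℕ) : Multiset ℕ :=
  t.bind fun b => Multiset.replicate (m ^ m.maxPowDiv b) (b / m ^ m.maxPowDiv b)

section Psi
variable {m : ℕ} (hm : 2 ≤ m)

lemma psi_mem {t : Multiset ℕ} {x : ℕ} (hx : x ∈ psi m t) :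
    ∃ b ∈ t, x = b / m ^ m.maxPowDiv b := by
  rw [psi, Multiset.mem_bind] at hx
  obtain ⟨b, hb, hx⟩ := hx
  exact ⟨b, hb, (Multiset.eq_of_mem_replicate hx)⟩

include hm

lemma psi_sum {t : Multiset ℕ} (ht : ∀ x ∈ t, 0 < x) : (psi m t).sum = t.sum := by
  rw [psi, Multiset.sum_bind]
  have : Multiset.map (fun b => (Multiset.replicate (m ^ m.maxPowDiv b) (b / m ^ m.maxPowDiv b)).sum) t
      = Multiset.map id t := by
    apply Multiset.map_congr rfl
    intro b hb
    rw [Multiset.sum_replicate, smul_eq_mul, mul_comm, gl_decomp, id_eq]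
  rw [this, Multiset.map_id]

lemma psi_pos {t : Multiset ℕ} (ht : ∀ x ∈ t, 0 < x) : ∀ x ∈ psi m t, 0 < x := by
  intro x hx
  obtain ⟨b, hb, rfl⟩ := psi_mem hx
  exact gl_q_pos hm (ht b hb)

lemma psi_not_dvd {t : Multiset ℕ} (ht : ∀ x ∈ t, 0 < x) : ∀ x ∈ psi m t, ¬ m ∣ x := by
  intro x hx
  obtain ⟨b, hb, rfl⟩ := psi_mem hx
  exact gl_not_dvd hm (ht b hb)

/-- Count formula for psi. -/
lemma psi_count {a N : ℕ} (ha : ¬ m ∣ a) (t : Multiset ℕ)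
    (ht : ∀ b ∈ t, 0 < b ∧ b < a * m ^ N) :
    (psi m t).count a = ∑ j ∈ Finset.range N, m ^ j * t.count (a * m ^ j) := by
  induction t using Multiset.induction with
  | empty => simp [psi]
  | cons b t ih =>
    have hb := ht b (Multiset.mem_cons_self b t)
    rw [psi, Multiset.cons_bind, Multiset.count_add, ← psi,
      ih (fun x hx => ht x (Multiset.mem_cons_of_mem hx))]
    have hcnt : ∀ j, (b ::ₘ t).count (a * m ^ j) = t.count (a * m ^ j) + (if a * m ^ j = b then 1 else 0) := by
      intro j
      rw [Multiset.count_cons]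
    simp only [hcnt, Nat.mul_add, Finset.sum_add_distrib]
    have key : ∑ j ∈ Finset.range N, m ^ j * (if a * m ^ j = b then 1 else 0)
        = Multiset.count a (Multiset.replicate (m ^ m.maxPowDiv b) (b / m ^ m.maxPowDiv b)) := by
      rw [Multiset.count_replicate]
      by_cases hq : b / m ^ m.maxPowDiv b = a
      · rw [if_pos hq]
        have hvN : m.maxPowDiv b < N := by
          have hbe : a * m ^ m.maxPowDiv b = b := by
            rw [gl_eq_iff hm ha hb.1]; exact ⟨hq, rfl⟩
          have : a * m ^ m.maxPowDiv b < a * m ^ N := by rw [hbe]; exact hb.2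
          have ha0 : 0 < a := Nat.pos_of_ne_zero (fun h => ha (h ▸ dvd_zero m))
          have := Nat.lt_of_mul_lt_mul_left this
          exact (Nat.pow_lt_pow_iff_right (by omega)).mp this
        have : ∀ j ∈ Finset.range N, m ^ j * (if a * m ^ j = b then 1 else 0)
            = if j = m.maxPowDiv b then m ^ m.maxPowDiv b else 0 := by
          intro j _
          by_cases hj : j = m.maxPowDiv b
          · subst hj
            rw [if_pos rfl, if_pos, mul_one]
            rw [gl_eq_iff hm ha hb.1]; exact ⟨hq, rfl⟩
          · rw [if_neg, if_neg hj, mul_zero]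
            intro hcon
            exact hj ((gl_eq_iff hm ha hb.1 j).mp hcon).2.symm
        rw [Finset.sum_congr rfl this, Finset.sum_ite_eq' (Finset.range N),
          if_pos (Finset.mem_range.mpr hvN)]
      · rw [if_neg hq]
        apply Finset.sum_eq_zero
        intro j _
        rw [if_neg, mul_zero]
        intro hcon
        exact hq ((gl_eq_iff hm ha hb.1 j).mp hcon).1
    omega

end Psi
/-- Uniqueness of base-m digits. -/
lemma gl_digits_unique {m : ℕ} (hm : 2 ≤ m) :
    ∀ (N : ℕ) (c c' : ℕ → ℕ), (∀ j, j < N → c j < m) → (∀ j, j < N → c' j < m) →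
    (∑ j ∈ Finset.range N, m ^ j * c j = ∑ j ∈ Finset.range N, m ^ j * c' j) →
    ∀ j, j < N → c j = c' j := by
  intro N
  induction N with
  | zero => intro c c' _ _ _ j hj; omega
  | succ N ih =>
    intro c c' hc hc' hsum j hj
    rw [Finset.sum_range_succ' (fun j => m ^ j * c j), Finset.sum_range_succ' (fun j => m ^ j * c' j)] at hsum
    simp only [pow_succ, pow_zero, one_mul] at hsum
    have e1 : ∑ j ∈ Finset.range N, m ^ j * m * c (j + 1) = m * ∑ j ∈ Finset.range N, m ^ j * c (j + 1) := by
      rw [Finset.mul_sum]; apply Finset.sum_congr rfl; intro i _; ring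
    have e2 : ∑ j ∈ Finset.range N, m ^ j * m * c' (j + 1) = m * ∑ j ∈ Finset.range N, m ^ j * c' (j + 1) := by
      rw [Finset.mul_sum]; apply Finset.sum_congr rfl; intro i _; ring
    rw [e1, e2] at hsum
    have h0 : c 0 = c' 0 := by
      have hc0 := hc 0 (by omega)
      have hc'0 := hc' 0 (by omega)
      have := congrArg (· % m) hsum
      simpa [Nat.add_mul_mod_self_left, Nat.mul_add_mod, Nat.mod_eq_of_lt hc0, Nat.mod_eq_of_lt hc'0] using this
    have htail : ∑ j ∈ Finset.range N, m ^ j * c (j + 1) = ∑ j ∈ Finset.range N, m ^ j * c' (j + 1) := by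
      have hmpos : 0 < m := by omega
      have : m * ∑ j ∈ Finset.range N, m ^ j * c (j + 1) = m * ∑ j ∈ Finset.range N, m ^ j * c' (j + 1) := by omega
      exact Nat.eq_of_mul_eq_mul_left hmpos this
    rcases Nat.eq_zero_or_pos j with rfl | hjpos
    · exact h0
    · obtain ⟨k, rfl⟩ : ∃ k, j = k + 1 := ⟨j - 1, by omega⟩
      exact ih (fun j => c (j + 1)) (fun j => c' (j + 1))
        (fun j hj => hc (j + 1) (by omega)) (fun j hj => hc' (j + 1) (by omega)) htail k (by omega)

lemma psi_injective {m : ℕ} (hm : 2 ≤ m) {t t' : Multiset ℕ}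
    (ht : ∀ x ∈ t, 0 < x) (ht' : ∀ x ∈ t', 0 < x)
    (hct : ∀ x, t.count x < m) (hct' : ∀ x, t'.count x < m)
    (h : psi m t = psi m t') : t = t' := by
  ext b
  rcases Nat.eq_zero_or_pos b with rfl | hb
  · rw [Multiset.count_eq_zero_of_notMem (fun hc => absurd (ht 0 hc) (lt_irrefl 0)),
      Multiset.count_eq_zero_of_notMem (fun hc => absurd (ht' 0 hc) (lt_irrefl 0))]
  set a := b / m ^ m.maxPowDiv b with ha_def
  have ha : ¬ m ∣ a := gl_not_dvd hm hb
  have ha0 : 0 < a := gl_q_pos hm hb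
  set N := t.sum + t'.sum + b + 1 with hN
  have hbound : ∀ (s : Multiset ℕ), (∀ x ∈ s, 0 < x) → s.sum ≤ t.sum + t'.sum → ∀ x ∈ s, x < a * m ^ N := by
    intro s hs hsum x hx
    have h1 : x ≤ s.sum := Multiset.single_le_sum (fun y hy => Nat.zero_le y) x hx
    have h2 : N ≤ m ^ N := (Nat.lt_pow_self (n := N) (by omega)).le
    calc x ≤ t.sum + t'.sum := le_trans h1 hsum
    _ < N := by omega
    _ ≤ m ^ N := h2
    _ ≤ a * m ^ N := Nat.le_mul_of_pos_left _ ha0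
  have hf1 := psi_count hm ha t (fun x hx => ⟨ht x hx, hbound t ht (by omega) x hx⟩)
  have hf2 := psi_count hm ha t' (fun x hx => ⟨ht' x hx, hbound t' ht' (by omega) x hx⟩)
  have hsum_eq : ∑ j ∈ Finset.range N, m ^ j * t.count (a * m ^ j)
      = ∑ j ∈ Finset.range N, m ^ j * t'.count (a * m ^ j) := by
    rw [← hf1, ← hf2, h]
  have hvN : m.maxPowDiv b < N := by
    have : m ^ m.maxPowDiv b ≤ b := Nat.le_of_dvd hb (Nat.maxPowDiv.pow_dvd (p := m) (n := b))
    have h2 : m.maxPowDiv b < m ^ m.maxPowDiv b := Nat.lt_pow_self (by omega)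
    omega
  have := gl_digits_unique hm N (fun j => t.count (a * m ^ j)) (fun j => t'.count (a * m ^ j))
    (fun j _ => hct _) (fun j _ => hct' _) hsum_eq (m.maxPowDiv b) hvN
  simp only [ha_def] at this
  rwa [gl_decomp] at this
/-- Inverse map: part `a` with multiplicity `k` becomes parts `a * m^i` with multiplicity the
`i`-th base-`m` digit of `k`. -/
def phi (m : ℕ) (s : Multiset ℕ) : Multiset ℕ :=
  ∑ a ∈ s.toFinset, ∑ i ∈ Finset.range (Nat.digits m (s.count a)).length,
    Multiset.replicate ((Nat.digits m (s.count a)).getD i 0) (a * m ^ i)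

lemma gl_ofDigits (m : ℕ) (L : List ℕ) :
    ∑ i ∈ Finset.range L.length, (L.getD i 0) * m ^ i = Nat.ofDigits m L := by
  induction L with
  | nil => simp [Nat.ofDigits]
  | cons d L ih =>
    rw [List.length_cons, Finset.sum_range_succ' (fun i => (d :: L).getD i 0 * m ^ i)]
    simp only [List.getD_cons_succ, List.getD_cons_zero, pow_zero, mul_one, pow_succ]
    have : ∑ i ∈ Finset.range L.length, L.getD i 0 * (m ^ i * m)
        = m * ∑ i ∈ Finset.range L.length, L.getD i 0 * m ^ i := by
      rw [Finset.mul_sum]; apply Finset.sum_congr rfl; intro i _; ring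
    rw [this, ih, Nat.ofDigits_cons]
    push_cast
    ring

lemma gl_repl_sum {ι : Type*} (a : ℕ) (F : Finset ι) (f : ι → ℕ) :
    ∑ i ∈ F, Multiset.replicate (f i) a = Multiset.replicate (∑ i ∈ F, f i) a := by
  classical
  induction F using Finset.induction_on with
  | empty => simp
  | insert _ _ hx ih => rw [Finset.sum_insert hx, Finset.sum_insert hx, ih, Multiset.replicate_add]

lemma psi_replicate {m : ℕ} (k c : ℕ) :
    psi m (Multiset.replicate k c)
      = Multiset.replicate (k * m ^ m.maxPowDiv c) (c / m ^ m.maxPowDiv c) := by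
  induction k with
  | zero => simp [psi]
  | succ k ih =>
    rw [Multiset.replicate_succ, psi, Multiset.cons_bind, ← psi, ih, Nat.succ_mul,
      Nat.add_comm, Multiset.replicate_add]

lemma psi_phi {m : ℕ} (hm : 2 ≤ m) {s : Multiset ℕ}
    (hpos : ∀ x ∈ s, 0 < x) (hdvd : ∀ x ∈ s, ¬ m ∣ x) :
    psi m (phi m s) = s := by
  classical
  have hpsi_sum : ∀ {ι : Type} (F : Finset ι) (f : ι → Multiset ℕ),
      psi m (∑ i ∈ F, f i) = ∑ i ∈ F, psi m (f i) := by
    intro ι F f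
    exact map_sum (⟨⟨psi m, Multiset.zero_bind _⟩, fun u v => Multiset.add_bind u v _⟩ : Multiset ℕ →+ Multiset ℕ) f F
  rw [phi, hpsi_sum]
  have step : ∀ a ∈ s.toFinset,
      psi m (∑ i ∈ Finset.range (Nat.digits m (s.count a)).length,
        Multiset.replicate ((Nat.digits m (s.count a)).getD i 0) (a * m ^ i))
      = Multiset.replicate (s.count a) a := by
    intro a haF
    have haM := Multiset.mem_toFinset.mp haF
    have ha : ¬ m ∣ a := hdvd a haM
    rw [hpsi_sum]
    have : ∀ i ∈ Finset.range (Nat.digits m (s.count a)).length,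
        psi m (Multiset.replicate ((Nat.digits m (s.count a)).getD i 0) (a * m ^ i))
        = Multiset.replicate ((Nat.digits m (s.count a)).getD i 0 * m ^ i) a := by
      intro i _
      rw [psi_replicate, gl_q_eq hm ha i, gl_v_eq hm ha i]
    rw [Finset.sum_congr rfl this, gl_repl_sum, gl_ofDigits, Nat.ofDigits_digits]
  rw [Finset.sum_congr rfl step]
  have : ∀ a ∈ s.toFinset, Multiset.replicate (s.count a) a = s.count a • {a} := by
    intro a _; rw [Multiset.nsmul_singleton]
  rw [Finset.sum_congr rfl this, Multiset.toFinset_sum_count_nsmul_eq]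

lemma phi_pos {m : ℕ} (hm : 2 ≤ m) {s : Multiset ℕ} (hpos : ∀ x ∈ s, 0 < x) :
    ∀ x ∈ phi m s, 0 < x := by
  intro x hx
  rw [phi, Multiset.mem_sum] at hx
  obtain ⟨a, haF, hx⟩ := hx
  rw [Multiset.mem_sum] at hx
  obtain ⟨i, _, hx⟩ := hx
  have := Multiset.eq_of_mem_replicate hx
  subst this
  have : 0 < a := hpos a (Multiset.mem_toFinset.mp haF)
  exact Nat.mul_pos this (pow_pos (by omega) i)
lemma phi_count_lt {m : ℕ} (hm : 2 ≤ m) {s : Multiset ℕ}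
    (hpos : ∀ x ∈ s, 0 < x) (hdvd : ∀ x ∈ s, ¬ m ∣ x) :
    ∀ x : ℕ, (phi m s).count x < m := by
  classical
  intro x
  rcases Nat.eq_zero_or_pos x with rfl | hx
  · rw [Multiset.count_eq_zero_of_notMem]
    · omega
    · intro hc
      exact absurd (phi_pos hm hpos 0 hc) (lt_irrefl 0)
  rw [phi, Multiset.count_sum']
  simp only [Multiset.count_sum', Multiset.count_replicate]
  set q := x / m ^ m.maxPowDiv x with hq_def
  have hrw : (∑ a ∈ s.toFinset, ∑ i ∈ Finset.range (Nat.digits m (s.count a)).length,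
      if a * m ^ i = x then (Nat.digits m (s.count a)).getD i 0 else 0)
      = (∑ i ∈ Finset.range (Nat.digits m (s.count q)).length,
      if q * m ^ i = x then (Nat.digits m (s.count q)).getD i 0 else 0) := by
    apply Finset.sum_eq_single q
    · intro a haF hne
      apply Finset.sum_eq_zero
      intro i _
      rw [if_neg]
      intro hcon
      have ha : ¬ m ∣ a := hdvd a (Multiset.mem_toFinset.mp haF)
      exact hne ((gl_eq_iff hm ha hx i).mp hcon).1.symm
    · intro hqF
      have : s.count q = 0 := by
        rw [Multiset.count_eq_zero]
        intro hc
        exact hqF (Multiset.mem_toFinset.mpr hc)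
      rw [this]
      simp
  rw [hrw]
  by_cases hqs : q ∈ s
  · have hq_dvd : ¬ m ∣ q := gl_not_dvd hm hx
    have hterm : ∀ i ∈ Finset.range (Nat.digits m (s.count q)).length,
        (if q * m ^ i = x then (Nat.digits m (s.count q)).getD i 0 else 0)
        = (if i = m.maxPowDiv x then (Nat.digits m (s.count q)).getD i 0 else 0) := by
      intro i _
      by_cases hi : i = m.maxPowDiv x
      · subst hi
        rw [if_pos rfl, if_pos (gl_decomp (m := m) (b := x))]
      · rw [if_neg hi, if_neg]
        intro hcon
        exact hi ((gl_eq_iff hm hq_dvd hx i).mp hcon).2.symm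
    rw [Finset.sum_congr rfl hterm, Finset.sum_ite_eq' (Finset.range _)]
    by_cases hmem : m.maxPowDiv x ∈ Finset.range (Nat.digits m (s.count q)).length
    · rw [if_pos hmem]
      have hlen := Finset.mem_range.mp hmem
      rw [List.getD_eq_getElem _ _ hlen]
      exact Nat.digits_lt_base (by omega) (List.getElem_mem hlen)
    · rw [if_neg hmem]; omega
  · have : s.count q = 0 := Multiset.count_eq_zero.mpr hqs
    rw [this]
    simp
    omega

lemma glaisher_multiset (m n : ℕ) (hm : 2 ≤ m) :
    Nat.card {s : Multiset ℕ // (∀ x ∈ s, 0 < x) ∧ s.sum = n ∧ ∀ x ∈ s, ¬ m ∣ x} =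
    Nat.card {t : Multiset ℕ // (∀ x ∈ t, 0 < x) ∧ t.sum = n ∧ ∀ x : ℕ, t.count x < m} := by
  symm
  apply Nat.card_congr
  apply Equiv.ofBijective
    (f := fun t => (⟨psi m t.1, psi_pos hm t.2.1, by rw [psi_sum hm t.2.1]; exact t.2.2.1,
      psi_not_dvd hm t.2.1⟩ :
      {s : Multiset ℕ // (∀ x ∈ s, 0 < x) ∧ s.sum = n ∧ ∀ x ∈ s, ¬ m ∣ x}))
  constructor
  · rintro ⟨t, ht⟩ ⟨t', ht'⟩ h
    apply Subtype.ext
    exact psi_injective hm ht.1 ht'.1 ht.2.2 ht'.2.2 (congrArg Subtype.val h)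
  · rintro ⟨s, hs⟩
    have hps := psi_phi hm hs.1 hs.2.2
    have hsum : (phi m s).sum = n := by
      have := psi_sum hm (phi_pos hm hs.1)
      rw [hps] at this
      rw [← this, hs.2.1]
    exact ⟨⟨phi m s, phi_pos hm hs.1, hsum, phi_count_lt hm hs.1 hs.2.2⟩, Subtype.ext hps⟩

lemma listMultisetCard (P : Multiset ℕ → Prop) :
    Nat.card {l : List ℕ // l.Pairwise (· ≥ ·) ∧ P ↑l} = Nat.card {s : Multiset ℕ // P s} := by
  apply Nat.card_congr
  refine ⟨fun l => ⟨↑l.1, l.2.2⟩,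
    fun s => ⟨Multiset.sort s.1 (· ≥ ·), Multiset.pairwise_sort _ _, by
      rw [Multiset.sort_eq]; exact s.2⟩, ?_, ?_⟩
  · rintro ⟨l, hl, hP⟩
    apply Subtype.ext
    show Multiset.sort (↑l) (· ≥ ·) = l
    apply List.Perm.eq_of_pairwise' (Multiset.pairwise_sort _ _) hl
    rw [← Multiset.coe_eq_coe, Multiset.sort_eq]
  · rintro ⟨s, hs⟩
    exact Subtype.ext (Multiset.sort_eq s _)

theorem glaisher (m n : ℕ) (hm : 2 ≤ m) (hn : 1 ≤ n) :
    Nat.card {l : List ℕ // IsPartition l ∧ l.sum = n ∧ ∀ x ∈ l, ¬ m ∣ x} =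
    Nat.card {l : List ℕ // IsPartition l ∧ l.sum = n ∧ ∀ x : ℕ, l.count x < m} := by
  have h1 : Nat.card {l : List ℕ // IsPartition l ∧ l.sum = n ∧ ∀ x ∈ l, ¬ m ∣ x}
      = Nat.card {s : Multiset ℕ // (∀ x ∈ s, 0 < x) ∧ s.sum = n ∧ ∀ x ∈ s, ¬ m ∣ x} :=
    (Nat.card_congr (Equiv.subtypeEquivRight (fun l => by
      unfold IsPartition
      simp only [Multiset.mem_coe, Multiset.sum_coe]
      tauto))).trans (listMultisetCard _)
  have h2 : Nat.card {l : List ℕ // IsPartition l ∧ l.sum = n ∧ ∀ x : ℕ, l.count x < m}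
      = Nat.card {t : Multiset ℕ // (∀ x ∈ t, 0 < x) ∧ t.sum = n ∧ ∀ x : ℕ, t.count x < m} :=
    (Nat.card_congr (Equiv.subtypeEquivRight (fun l => by
      unfold IsPartition
      simp only [Multiset.mem_coe, Multiset.sum_coe, Multiset.coe_count]
      tauto))).trans (listMultisetCard _)
  rw [h1, h2]
  exact glaisher_multiset m n hm
end

section
/- For all m ≥ 2 and n ≤ m, the number of partitions with perimeter n and no part divisible by m equals the number of partitions with perimeter n in which every part repeats fewer than m times. -/
lemma mem_le_headI {l : List ℕ} (hs : l.Pairwise (· ≥ ·)) {x : ℕ} (hx : x ∈ l) :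
    x ≤ l.headI := by
  cases l with
  | nil => simp at hx
  | cons a t =>
    rcases List.mem_cons.mp hx with rfl | h
    · exact le_refl _
    · exact (List.pairwise_cons.mp hs).1 x h

/-- swap `[m]` and `replicate m 1`, identity otherwise -/
def swapf (m : ℕ) (l : List ℕ) : List ℕ :=
  if l = [m] then List.replicate m 1 else if l = List.replicate m 1 then [m] else l

lemma swapf_invol (m : ℕ) (hm : 2 ≤ m) : Function.Involutive (swapf m) := by
  have hne : [m] ≠ List.replicate m 1 := by
    intro h
    have := congrArg List.length h
    simp at this
    omega
  intro l
  unfold swapf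
  by_cases h1 : l = [m]
  · simp [h1, hne.symm, hne]
  · by_cases h2 : l = List.replicate m 1
    · simp [h1, h2, hne]
    · simp [h1, h2]

/-- A partition with perimeter n ≤ m, not all-ones, has all counts < m. -/
lemma counts_lt {m n : ℕ} (hm : 2 ≤ m) (hnm : n ≤ m) {l : List ℕ}
    (hp : IsPartition l) (hper : perimeter l = n) (hne : l ≠ List.replicate m 1) :
    ∀ x : ℕ, l.count x < m := by
  intro x
  by_contra h
  push_neg at h
  have hcl : m ≤ l.length := le_trans h List.count_le_length
  have hxl : x ∈ l := by
    rw [← List.count_pos_iff]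
    omega
  have hx1 : 1 ≤ x := hp.1 x hxl
  have hxh : x ≤ l.headI := mem_le_headI hp.2 hxl
  have hh1 : 1 ≤ l.headI := le_trans hx1 hxh
  unfold perimeter at hper
  have hh : l.headI = 1 := by omega
  have hlen : l.length = m := by omega
  apply hne
  rw [← hlen]
  apply List.eq_replicate_of_mem
  intro b hb
  have hb1 := hp.1 b hb
  have hbh := mem_le_headI hp.2 hb
  omega

/-- A partition with perimeter n ≤ m, not `[m]`, has no part divisible by m. -/
lemma no_div {m n : ℕ} (hm : 2 ≤ m) (hnm : n ≤ m) {l : List ℕ}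
    (hp : IsPartition l) (hper : perimeter l = n) (hne : l ≠ [m]) :
    ∀ x ∈ l, ¬ m ∣ x := by
  intro x hxl hdvd
  have hx1 : 1 ≤ x := hp.1 x hxl
  have hxm : m ≤ x := Nat.le_of_dvd (by omega) hdvd
  have hxh : x ≤ l.headI := mem_le_headI hp.2 hxl
  have hlen : 1 ≤ l.length := List.length_pos_iff.mpr (by rintro rfl; simp at hxl)
  unfold perimeter at hper
  have hh : l.headI = m := by omega
  have hlen1 : l.length = 1 := by omega
  apply hne
  rcases l with _ | ⟨a, t⟩
  · simp at hlen
  · simp at hlen1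
    subst hlen1
    simp at hh ⊢
    exact hh

lemma isPartition_rep (m : ℕ) : IsPartition (List.replicate m 1) := by
  constructor
  · intro x hx
    rw [List.eq_of_mem_replicate hx]
    omega
  · exact List.pairwise_replicate.mpr (by simp)

lemma perimeter_rep {m : ℕ} (hm : 2 ≤ m) : perimeter (List.replicate m 1) = m := by
  rcases m with _ | k
  · omega
  · simp [perimeter, List.replicate_succ]

theorem equality_small_n (m n : ℕ) (hm : 2 ≤ m) (hn : 1 ≤ n) (hnm : n ≤ m) :
    Nat.card {l : List ℕ // IsPartition l ∧ perimeter l = n ∧ ∀ x ∈ l, ¬ m ∣ x} =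
    Nat.card {l : List ℕ // IsPartition l ∧ perimeter l = n ∧ ∀ x : ℕ, l.count x < m} := by
  apply Nat.card_congr
  apply Equiv.subtypeEquiv (Function.Involutive.toPerm _ (swapf_invol m hm))
  intro l
  simp only [Function.Involutive.coe_toPerm]
  have hne : ([m] : List ℕ) ≠ List.replicate m 1 := by
    intro h
    have := congrArg List.length h
    simp at this
    omega
  by_cases h1 : l = [m]
  · subst h1
    have : swapf m [m] = List.replicate m 1 := by simp [swapf]
    rw [this]
    constructor
    · rintro ⟨-, -, hd⟩
      exact absurd dvd_rfl (hd m (by simp))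
    · rintro ⟨-, -, hc⟩
      have := hc 1
      simp at this
  · by_cases h2 : l = List.replicate m 1
    · subst h2
      have : swapf m (List.replicate m 1) = [m] := by simp [swapf, hne.symm]
      rw [this]
      constructor
      · rintro ⟨-, hper, -⟩
        rw [perimeter_rep hm] at hper
        refine ⟨⟨by intro x hx; simp at hx; omega, List.pairwise_singleton _ m⟩, ?_, ?_⟩
        · simp [perimeter]; omega
        · intro x
          have h1 : List.count x [m] ≤ 1 := by
            have : List.count x [m] ≤ List.length [m] := List.count_le_length
            simpa using this
          omega
      · rintro ⟨-, hper, -⟩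
        simp [perimeter] at hper
        refine ⟨isPartition_rep m, ?_, ?_⟩
        · rw [perimeter_rep hm]; omega
        · intro x hx
          rw [List.eq_of_mem_replicate hx]
          intro hd
          have := Nat.le_of_dvd one_pos hd
          omega
    · have : swapf m l = l := by simp [swapf, h1, h2]
      rw [this]
      constructor
      · rintro ⟨hp, hper, -⟩
        exact ⟨hp, hper, counts_lt hm hnm hp hper h2⟩
      · rintro ⟨hp, hper, -⟩
        exact ⟨hp, hper, no_div hm hnm hp hper h1⟩
end

section
/- For all m, n ≥ 1, the number of partitions with perimeter n and all parts congruent to 1 modulo m+1 equals the number of partitions with perimeter n whose consecutive parts differ by at least m. -/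
namespace FuTangAux

/-- Build the partition with parts ≡ 1 mod (m+1) whose multiplicity list is `ds`,
listed from the largest part `(m+1)*(ds.length-1)+1` down to part `1`. -/
def stack (m : ℕ) : List ℕ → List ℕ
  | [] => []
  | c :: t => List.replicate c ((m + 1) * t.length + 1) ++ stack m t

lemma stack_length (m : ℕ) (ds : List ℕ) : (stack m ds).length = ds.sum := by
  induction ds with
  | nil => simp [stack]
  | cons c t ih => simp [stack, ih]

lemma mem_stack {m x : ℕ} : ∀ {ds : List ℕ}, x ∈ stack m ds →
    ∃ j, j < ds.length ∧ x = (m + 1) * j + 1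
  | [], h => by simp [stack] at h
  | c :: t, h => by
    rw [stack, List.mem_append] at h
    rcases h with h | h
    · exact ⟨t.length, by simp, (List.eq_of_mem_replicate h)⟩
    · obtain ⟨j, hj, rfl⟩ := mem_stack h
      exact ⟨j, by simp; omega, rfl⟩

lemma stack_sorted (m : ℕ) : ∀ ds : List ℕ, (stack m ds).Pairwise (· ≥ ·)
  | [] => by simp [stack]
  | c :: t => by
    rw [stack, List.pairwise_append]
    refine ⟨by simp [List.pairwise_replicate], stack_sorted m t, ?_⟩
    intro a ha b hb
    obtain rfl := List.eq_of_mem_replicate ha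
    obtain ⟨j, hj, rfl⟩ := mem_stack hb
    have : (m + 1) * j ≤ (m + 1) * t.length := Nat.mul_le_mul_left _ (le_of_lt hj)
    omega

lemma stack_headI (m s : ℕ) (cs : List ℕ) (hs : 1 ≤ s) :
    (stack m (s :: cs)).headI = (m + 1) * cs.length + 1 := by
  obtain ⟨s', rfl⟩ : ∃ s', s = s' + 1 := ⟨s - 1, by omega⟩
  simp [stack, List.replicate_succ]

lemma top_not_mem_stack (m : ℕ) (ds : List ℕ) : (m + 1) * ds.length + 1 ∉ stack m ds := by
  intro h
  obtain ⟨j, hj, he⟩ := mem_stack h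
  have : (m + 1) * (j + 1) ≤ (m + 1) * ds.length := Nat.mul_le_mul_left _ hj
  have h2 : (m + 1) * (j + 1) = (m + 1) * j + (m + 1) := by ring
  omega

lemma stack_inj (m : ℕ) : ∀ {ds ds' : List ℕ}, ds.length = ds'.length →
    stack m ds = stack m ds' → ds = ds'
  | [], [], _, _ => rfl
  | [], _ :: _, h, _ => by simp at h
  | _ :: _, [], h, _ => by simp at h
  | c :: t, c' :: t', hl, h => by
    have hlt : t.length = t'.length := by simpa using hl
    rw [stack, stack, ← hlt] at h
    have hc : c = c' := by
      have := congrArg (List.count ((m + 1) * t.length + 1)) h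
      rwa [List.count_append, List.count_append, List.count_replicate_self,
        List.count_replicate_self,
        List.count_eq_zero_of_not_mem (top_not_mem_stack m t),
        List.count_eq_zero_of_not_mem (by rw [hlt]; exact top_not_mem_stack m t')] at this
    subst hc
    have ht : stack m t = stack m t' := List.append_cancel_left h
    rw [stack_inj m hlt ht]

lemma stack_replicate_zero_append (m : ℕ) (j : ℕ) (ds : List ℕ) :
    stack m (List.replicate j 0 ++ ds) = stack m ds := by
  induction j with
  | zero => simp
  | succ j ih => simp [List.replicate_succ, stack, ih]

lemma stack_surj (m : ℕ) : ∀ l : List ℕ, l.Pairwise (· ≥ ·) →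
    (∀ x ∈ l, x % (m + 1) = 1) → l ≠ [] →
    ∃ s cs, 1 ≤ s ∧ stack m (s :: cs) = l
  | [], _, _, hne => absurd rfl hne
  | [a], _, hmod, _ => by
    have ha : a = (m + 1) * (a / (m + 1)) + 1 := by
      have h1 := hmod a (by simp)
      have h2 := Nat.div_add_mod a (m + 1)
      omega
    refine ⟨1, List.replicate (a / (m + 1)) 0, le_refl 1, ?_⟩
    have h3 : stack m (List.replicate (a / (m + 1)) 0) = [] := by
      simpa [stack] using stack_replicate_zero_append m (a / (m + 1)) []
    simp [stack, h3, List.length_replicate, ← ha]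
  | a :: b :: t', hsort, hmod, _ => by
    have ha : a = (m + 1) * (a / (m + 1)) + 1 := by
      have h1 := hmod a (by simp)
      have h2 := Nat.div_add_mod a (m + 1)
      omega
    set ka := a / (m + 1) with hka
    obtain ⟨s', cs', hs', heq⟩ := stack_surj m (b :: t') hsort.tail
      (fun x hx => hmod x (List.mem_cons_of_mem _ hx)) (by simp)
    have hb : b = (m + 1) * cs'.length + 1 := by
      have := stack_headI m s' cs' hs'
      rw [heq] at this
      simpa using this
    have hab : b ≤ a := List.rel_of_pairwise_cons hsort (by simp : b ∈ b :: t')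
    have hk : cs'.length ≤ ka := by
      by_contra hcon
      have : (m + 1) * (ka + 1) ≤ (m + 1) * cs'.length := Nat.mul_le_mul_left _ (by omega)
      have h2 : (m + 1) * (ka + 1) = (m + 1) * ka + (m + 1) := by ring
      omega
    rcases eq_or_lt_of_le hk with he | hlt
    · -- a = b : increase multiplicity
      have hab2 : a = b := by rw [ha, hb, he]
      refine ⟨s' + 1, cs', by omega, ?_⟩
      rw [stack, List.replicate_succ, List.cons_append, ← stack, heq, ← hb, hab2]
    · refine ⟨1, List.replicate (ka - cs'.length - 1) 0 ++ s' :: cs', le_refl 1, ?_⟩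
      rw [stack, stack_replicate_zero_append, heq]
      have hlen : (List.replicate (ka - cs'.length - 1) 0 ++ s' :: cs').length = ka := by
        simp; omega
      rw [hlen, ← ha]
      simp

/-- Build the `m`-gap partition with smallest part `s` and successive extra gaps `gs`
(from the top). -/
def gstack (m s : ℕ) : List ℕ → List ℕ
  | [] => [s]
  | g :: t => (g + m + (gstack m s t).headI) :: gstack m s t

lemma gstack_length (m s : ℕ) (gs : List ℕ) : (gstack m s gs).length = gs.length + 1 := by
  induction gs with
  | nil => simp [gstack]
  | cons g t ih => simp [gstack, ih]

lemma gstack_headI (m s : ℕ) (gs : List ℕ) :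
    (gstack m s gs).headI = gs.sum + m * gs.length + s := by
  induction gs with
  | nil => simp [gstack]
  | cons g t ih => simp [gstack, ih]; ring

lemma gstack_ne_nil (m s : ℕ) (gs : List ℕ) : gstack m s gs ≠ [] := by
  cases gs <;> simp [gstack]

lemma gstack_chain (m s : ℕ) : ∀ gs : List ℕ,
    (gstack m s gs).Chain' (fun a b => b + m ≤ a)
  | [] => by simp [gstack, List.Chain', List.isChain_singleton]
  | g :: t => by
    obtain ⟨h', rest, hrw⟩ := List.exists_cons_of_ne_nil (gstack_ne_nil m s t)
    have hch := gstack_chain m s t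
    rw [gstack, hrw] at *
    rw [List.Chain', List.isChain_cons_cons]
    exact ⟨by simp; omega, hch⟩

lemma gstack_pos (m s : ℕ) (hs : 1 ≤ s) : ∀ gs : List ℕ, ∀ x ∈ gstack m s gs, 0 < x
  | [], x, hx => by simp [gstack] at hx; omega
  | g :: t, x, hx => by
    rw [gstack, List.mem_cons] at hx
    rcases hx with rfl | hx
    · have := gstack_headI m s t
      omega
    · exact gstack_pos m s hs t x hx

lemma gstack_inj (m : ℕ) : ∀ {gs gs' : List ℕ} {s s' : ℕ},
    gstack m s gs = gstack m s' gs' → s = s' ∧ gs = gs'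
  | [], [], s, s', h => by simp [gstack] at h; exact ⟨h, rfl⟩
  | [], g :: t, s, s', h => by
    have := congrArg List.length h
    rw [gstack_length, gstack_length] at this
    simp at this
  | g :: t, [], s, s', h => by
    have := congrArg List.length h
    rw [gstack_length, gstack_length] at this
    simp at this
  | g :: t, g' :: t', s, s', h => by
    rw [gstack, gstack, List.cons_eq_cons] at h
    obtain ⟨h1, h2⟩ := h
    obtain ⟨rfl, rfl⟩ := gstack_inj m h2
    rw [h2] at h1
    exact ⟨rfl, by rw [show g = g' by omega]⟩

lemma gstack_surj (m : ℕ) : ∀ l : List ℕ, (∀ x ∈ l, 0 < x) →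
    l.Chain' (fun a b => b + m ≤ a) → l ≠ [] →
    ∃ s gs, 1 ≤ s ∧ gstack m s gs = l
  | [], _, _, hne => absurd rfl hne
  | [a], hp, _, _ => ⟨a, [], hp a (by simp), rfl⟩
  | a :: b :: t, hp, hc, _ => by
    obtain ⟨s, gs, hs, heq⟩ := gstack_surj m (b :: t)
      (fun x hx => hp x (List.mem_cons_of_mem _ hx)) hc.tail (by simp)
    have hab : b + m ≤ a := (List.isChain_cons_cons.mp hc).1
    refine ⟨s, (a - b - m) :: gs, hs, ?_⟩
    have hb : (gstack m s gs).headI = b := by rw [heq]; rfl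
    rw [gstack, hb, heq]
    congr 1
    omega

end FuTangAux

open FuTangAux in
theorem fu_tang (m n : ℕ) (hm : 1 ≤ m) (hn : 1 ≤ n) :
    Nat.card {l : List ℕ // IsPartition l ∧ perimeter l = n ∧ ∀ x ∈ l, x % (m + 1) = 1} =
    Nat.card {l : List ℕ // IsPartition l ∧ perimeter l = n ∧
      l.Chain' (fun a b => b + m ≤ a)} := by
  set C := {p : List ℕ × ℕ // 1 ≤ p.2 ∧ (m + 1) * p.1.length + (p.1.sum + p.2) = n} with hC
  -- map to side A
  have hfA : ∀ p : C, IsPartition (stack m (p.1.2 :: p.1.1)) ∧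
      perimeter (stack m (p.1.2 :: p.1.1)) = n ∧
      ∀ x ∈ stack m (p.1.2 :: p.1.1), x % (m + 1) = 1 := by
    rintro ⟨⟨cs, s⟩, hs, hsum⟩
    dsimp only at hs hsum
    refine ⟨⟨?_, stack_sorted m _⟩, ?_, ?_⟩
    · intro x hx
      obtain ⟨j, _, rfl⟩ := mem_stack hx
      omega
    · rw [perimeter, stack_headI m s cs hs, stack_length]
      simp only [List.sum_cons]
      omega
    · intro x hx
      obtain ⟨j, _, rfl⟩ := mem_stack hx
      rw [Nat.add_comm, Nat.add_mul_mod_self_left, Nat.mod_eq_of_lt (by omega)]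
  let fA : C → {l : List ℕ // IsPartition l ∧ perimeter l = n ∧ ∀ x ∈ l, x % (m + 1) = 1} :=
    fun p => ⟨stack m (p.1.2 :: p.1.1), hfA p⟩
  have hAbij : Function.Bijective fA := by
    constructor
    · rintro ⟨⟨cs, s⟩, hs, hsum⟩ ⟨⟨cs', s'⟩, hs', hsum'⟩ h
      have heq : stack m (s :: cs) = stack m (s' :: cs') := congrArg Subtype.val h
      have hlen : cs.length = cs'.length := by
        have h1 := stack_headI m s cs hs
        have h2 := stack_headI m s' cs' hs'
        rw [heq, h2] at h1
        have h3 : (m + 1) * cs.length = (m + 1) * cs'.length := by omega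
        exact Nat.eq_of_mul_eq_mul_left (Nat.succ_pos m) h3
      have := stack_inj m (by simpa using hlen) heq
      simp only [List.cons.injEq] at this
      exact Subtype.ext (Prod.ext this.2 this.1)
    · rintro ⟨l, ⟨hpos, hsort⟩, hper, hmod⟩
      have hne : l ≠ [] := by
        rintro rfl
        rw [perimeter] at hper
        simp at hper
        omega
      obtain ⟨s, cs, hs, heq⟩ := stack_surj m l hsort hmod hne
      have hsum : (m + 1) * cs.length + (cs.sum + s) = n := by
        rw [← heq, perimeter, stack_headI m s cs hs, stack_length] at hper
        simp only [List.sum_cons] at hper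
        omega
      exact ⟨⟨⟨cs, s⟩, hs, hsum⟩, Subtype.ext heq⟩
  -- map to side B
  have hfB : ∀ p : C, IsPartition (gstack m p.1.2 p.1.1) ∧
      perimeter (gstack m p.1.2 p.1.1) = n ∧
      (gstack m p.1.2 p.1.1).Chain' (fun a b => b + m ≤ a) := by
    rintro ⟨⟨gs, s⟩, hs, hsum⟩
    dsimp only at hs hsum ⊢
    refine ⟨⟨gstack_pos m s hs gs, ?_⟩, ?_, gstack_chain m s gs⟩
    · have := gstack_chain m s gs
      have h2 : (gstack m s gs).Chain' (· ≥ ·) := this.imp (fun h => by omega)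
      exact List.isChain_iff_pairwise.mp h2
    · rw [perimeter, gstack_headI, gstack_length]
      have hx : (m + 1) * gs.length = m * gs.length + gs.length := by ring
      omega
  let fB : C → {l : List ℕ // IsPartition l ∧ perimeter l = n ∧
      l.Chain' (fun a b => b + m ≤ a)} := fun p => ⟨gstack m p.1.2 p.1.1, hfB p⟩
  have hBbij : Function.Bijective fB := by
    constructor
    · rintro ⟨⟨gs, s⟩, hs, hsum⟩ ⟨⟨gs', s'⟩, hs', hsum'⟩ h
      have heq : gstack m s gs = gstack m s' gs' := congrArg Subtype.val h
      obtain ⟨rfl, rfl⟩ := gstack_inj m heq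
      rfl
    · rintro ⟨l, ⟨hpos, hsort⟩, hper, hch⟩
      have hne : l ≠ [] := by
        rintro rfl
        rw [perimeter] at hper
        simp at hper
        omega
      obtain ⟨s, gs, hs, heq⟩ := gstack_surj m l hpos hch hne
      have hsum : (m + 1) * gs.length + (gs.sum + s) = n := by
        rw [← heq, perimeter, gstack_headI, gstack_length] at hper
        have hx : (m + 1) * gs.length = m * gs.length + gs.length := by ring
        omega
      exact ⟨⟨⟨gs, s⟩, hs, hsum⟩, Subtype.ext heq⟩
  rw [← Nat.card_congr (Equiv.ofBijective fA hAbij),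
    ← Nat.card_congr (Equiv.ofBijective fB hBbij)]
end

section
/- For all n, m ≥ 1, the number of compositions of n with all parts congruent to 1 modulo m equals the number of compositions of n + m − 1 with all parts at least m. -/
/-- A composition of n: a finite sequence of positive integers summing to n. -/
def IsComposition (n : ℕ) (c : List ℕ) : Prop := (∀ x ∈ c, 0 < x) ∧ c.sum = n

def Fmap (m : ℕ) : List ℕ → List ℕ
  | [] => []
  | a :: c =>
    if a ≤ 1 then
      match Fmap m c with
      | [] => [m + 1]
      | b :: d => (b + 1) :: d
    else (m + 1) :: Fmap m ((a - (m + 1)) :: c)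
termination_by l => l.sum + l.length
decreasing_by all_goals simp_all [List.sum_cons]; omega

def Gmap (m : ℕ) : List ℕ → List ℕ
  | [] => []
  | b :: d =>
    if b ≤ m + 1 then
      match Gmap m d with
      | [] => [1]
      | x :: xs => (x + (m + 1)) :: xs
    else 1 :: Gmap m ((b - 1) :: d)
termination_by l => l.sum + l.length
decreasing_by all_goals simp_all [List.sum_cons]; omega

lemma mod_step (m b : ℕ) (hb : 2 ≤ b) (h : b % (m+1) = 1 % (m+1)) :
    m + 2 ≤ b ∧ (b - (m+1)) % (m+1) = 1 % (m+1) := by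
  rcases Nat.eq_zero_or_pos m with rfl | hm
  · simp [Nat.mod_one]; omega
  · have h1 : 1 % (m+1) = 1 := Nat.mod_eq_of_lt (by omega)
    have hble : m + 1 ≤ b := by
      by_contra hlt
      rw [Nat.mod_eq_of_lt (by omega)] at h
      omega
    have hmod := (Nat.mod_eq_sub_mod hble) ▸ h
    constructor
    · rcases Nat.lt_or_ge b (m+2) with h' | h'
      · have hbeq : b = m + 1 := by omega
        subst hbeq
        simp at h
        omega
      · exact h'
    · exact hmod

lemma F_spec (m : ℕ) : ∀ c : List ℕ, (∀ x ∈ c, 0 < x) → (∀ x ∈ c, x % (m+1) = 1 % (m+1)) →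
    (c ≠ [] → (Fmap m c).sum = c.sum + m) ∧ (∀ y ∈ Fmap m c, m + 1 ≤ y) ∧
      Gmap m (Fmap m c) = c := by
  intro c
  induction c using Fmap.induct (m := m) with
  | case1 => simp [Fmap, Gmap]
  | case2 b d hb hFd ih =>
    intro h1 h2
    have hb1 : b = 1 := by have := h1 b (by simp); omega
    subst hb1
    have hd : d = [] := by
      rcases d with _ | ⟨x, xs⟩
      · rfl
      · exfalso
        obtain ⟨hs, _, _⟩ := ih (fun x hx => h1 x (by simp [hx]))
          (fun x hx => h2 x (by simp [hx]))
        have hs' := hs (by simp)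
        rw [hFd] at hs'
        have : 0 < x := h1 x (by simp)
        simp only [List.sum_cons, List.sum_nil] at hs'
        omega
    subst hd
    simp [Fmap, Gmap]
    all_goals omega
  | case3 b d hb b1 d1 hFd ih =>
    intro h1 h2
    have hb1 : b = 1 := by have := h1 b (by simp); omega
    subst hb1
    have hdne : d ≠ [] := by
      intro hd; subst hd; simp [Fmap] at hFd
    obtain ⟨hs, hparts, hGF⟩ := ih (fun x hx => h1 x (by simp [hx]))
      (fun x hx => h2 x (by simp [hx]))
    have hs' := hs hdne
    rw [Fmap]
    simp only [le_refl, if_pos, hFd]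
    refine ⟨fun _ => ?_, ?_, ?_⟩
    · rw [hFd] at hs'
      simp only [List.sum_cons, List.sum_nil] at hs' ⊢
      omega
    · intro y hy
      rcases List.mem_cons.mp hy with rfl | hy'
      · have := hparts b1 (by rw [hFd]; simp)
        omega
      · exact hparts y (by rw [hFd]; simp [hy'])
    · have hb1m : ¬ (b1 + 1 ≤ m + 1) := by
        have := hparts b1 (by rw [hFd]; simp)
        omega
      rw [Gmap]
      simp only [hb1m, if_neg, not_false_iff]
      have : b1 + 1 - 1 = b1 := by omega
      rw [this, ← hFd, hGF]
  | case4 b d hb ih =>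
    intro h1 h2
    obtain ⟨hb2, hmod⟩ := mod_step m b (by omega) (h2 b (by simp))
    have hpos' : ∀ x ∈ (b - (m+1)) :: d, 0 < x := by
      intro x hx
      rcases List.mem_cons.mp hx with rfl | hx'
      · omega
      · exact h1 x (by simp [hx'])
    have hmod' : ∀ x ∈ (b - (m+1)) :: d, x % (m+1) = 1 % (m+1) := by
      intro x hx
      rcases List.mem_cons.mp hx with rfl | hx'
      · exact hmod
      · exact h2 x (by simp [hx'])
    obtain ⟨hs, hparts, hGF⟩ := ih hpos' hmod'
    have hs' := hs (by simp)
    rw [Fmap]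
    simp only [hb, if_neg, not_false_iff]
    refine ⟨fun _ => ?_, ?_, ?_⟩
    · simp only [List.sum_cons, List.sum_nil] at hs' ⊢
      omega
    · intro y hy
      rcases List.mem_cons.mp hy with rfl | hy'
      · omega
      · exact hparts y hy'
    · have hbe : b - (m + 1) + (m + 1) = b := by omega
      rw [Gmap]
      simp only [le_refl, if_pos, hGF, hbe]

lemma G_spec (m : ℕ) : ∀ d : List ℕ, (∀ y ∈ d, m + 1 ≤ y) →
    (d ≠ [] → (Gmap m d).sum + m = d.sum) ∧
      (∀ x ∈ Gmap m d, 0 < x ∧ x % (m+1) = 1 % (m+1)) ∧ Fmap m (Gmap m d) = d := by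
  intro d
  induction d using Gmap.induct (m := m) with
  | case1 => simp [Fmap, Gmap]
  | case2 b d hb hGd ih =>
    intro h
    have hb1 : b = m + 1 := by have := h b (by simp); omega
    subst hb1
    have hd : d = [] := by
      rcases d with _ | ⟨x, xs⟩
      · rfl
      · exfalso
        obtain ⟨hs, _, _⟩ := ih (fun y hy => h y (by simp [hy]))
        have hs' := hs (by simp)
        rw [hGd] at hs'
        have : m + 1 ≤ x := h x (by simp)
        simp only [List.sum_cons, List.sum_nil] at hs'
        omega
    subst hd
    simp [Fmap, Gmap]
    all_goals omega
  | case3 b d hb x xs hGd ih =>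
    intro h
    have hb1 : b = m + 1 := by have := h b (by simp); omega
    subst hb1
    have hdne : d ≠ [] := by
      intro hd; subst hd; simp [Gmap] at hGd
    obtain ⟨hs, hparts, hFG⟩ := ih (fun y hy => h y (by simp [hy]))
    have hs' := hs hdne
    rw [Gmap]
    simp only [le_refl, if_pos, hGd]
    have hxpos : 0 < x := (hparts x (by rw [hGd]; simp)).1
    refine ⟨fun _ => ?_, ?_, ?_⟩
    · rw [hGd] at hs'
      simp only [List.sum_cons, List.sum_nil] at hs' ⊢
      omega
    · intro y hy
      rcases List.mem_cons.mp hy with rfl | hy'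
      · refine ⟨by omega, ?_⟩
        have := (hparts x (by rw [hGd]; simp)).2
        rw [Nat.add_mod_right]
        exact this
      · exact hparts y (by rw [hGd]; simp [hy'])
    · rw [Fmap]
      have hxm : ¬ (x + (m + 1) ≤ 1) := by omega
      simp only [hxm, if_neg, not_false_iff]
      have : x + (m + 1) - (m + 1) = x := by omega
      rw [this, ← hGd, hFG]
  | case4 b d hb ih =>
    intro h
    have hb2 : m + 2 ≤ b := by omega
    have h' : ∀ y ∈ (b - 1) :: d, m + 1 ≤ y := by
      intro y hy
      rcases List.mem_cons.mp hy with rfl | hy'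
      · omega
      · exact h y (by simp [hy'])
    obtain ⟨hs, hparts, hFG⟩ := ih h'
    have hs' := hs (by simp)
    have hGne : Gmap m ((b - 1) :: d) ≠ [] := by
      intro hG
      rw [hG] at hs'
      simp only [List.sum_cons, List.sum_nil] at hs'
      omega
    rw [Gmap]
    simp only [hb, if_neg, not_false_iff]
    refine ⟨fun _ => ?_, ?_, ?_⟩
    · simp only [List.sum_cons, List.sum_nil] at hs' ⊢
      omega
    · intro y hy
      rcases List.mem_cons.mp hy with rfl | hy'
      · exact ⟨by omega, rfl⟩
      · exact hparts y hy'
    · rcases hG : Gmap m ((b - 1) :: d) with _ | ⟨y, ys⟩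
      · exact absurd hG hGne
      · rw [Fmap]
        simp only [le_refl, if_pos]
        rw [← hG, hFG]
        simp
        omega

theorem munagi (n m : ℕ) (hn : 1 ≤ n) (hm : 1 ≤ m) :
    Nat.card {c : List ℕ // IsComposition n c ∧ ∀ x ∈ c, x % m = 1 % m} =
    Nat.card {c : List ℕ // IsComposition (n + m - 1) c ∧ ∀ x ∈ c, m ≤ x} := by
  obtain ⟨k, rfl⟩ : ∃ k, m = k + 1 := ⟨m - 1, (Nat.succ_pred_eq_of_pos hm).symm⟩
  have hnk : n + (k + 1) - 1 = n + k := by omega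
  refine Nat.card_congr (Equiv.ofBijective (fun c => ⟨Fmap k c.1, ?_⟩) ⟨?_, ?_⟩)
  · obtain ⟨c, ⟨hpos, hsum⟩, hmod⟩ := c
    obtain ⟨hs, hparts, _⟩ := F_spec k c hpos hmod
    have hcne : c ≠ [] := by
      intro hc; subst hc; simp at hsum; omega
    refine ⟨⟨fun x hx => by have := hparts x hx; omega, ?_⟩, fun x hx => hparts x hx⟩
    rw [hs hcne, hsum, hnk]
  · rintro ⟨c, ⟨hpos, hsum⟩, hmod⟩ ⟨c', ⟨hpos', hsum'⟩, hmod'⟩ hF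
    simp only [Subtype.mk.injEq] at hF ⊢
    have h1 := (F_spec k c hpos hmod).2.2
    have h2 := (F_spec k c' hpos' hmod').2.2
    rw [← h1, ← h2, hF]
  · rintro ⟨d, ⟨hpos, hsum⟩, hge⟩
    obtain ⟨hs, hparts, hFG⟩ := G_spec k d hge
    have hdne : d ≠ [] := by
      intro hd; subst hd; simp at hsum; omega
    have hs' := hs hdne
    refine ⟨⟨Gmap k d, ⟨fun x hx => (hparts x hx).1, ?_⟩, fun x hx => (hparts x hx).2⟩, ?_⟩
    · rw [hsum, hnk] at hs'; omega
    · simp only [Subtype.mk.injEq]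
      exact hFG
end

section
/- Let m ≥ 2, n ≥ 1, and let R be a nonempty subset of {1, 2, …, m−1}. The number of compositions of n all of whose parts are congruent modulo m to some element of R equals the number of compositions of n all of whose parts lie in R ∪ {m} and whose last part lies in R. -/
/-- Forward map: each part x becomes (x/m) copies of m followed by x % m. -/
def toM (m : ℕ) (c : List ℕ) : List ℕ :=
  c.flatMap (fun x => List.replicate (x / m) m ++ [x % m])

def addHead (m : ℕ) : List ℕ → List ℕ
  | [] => [m]
  | y :: t => (m + y) :: t

/-- Backward map: merge runs of m's into the following part. -/
def fromM (m : ℕ) : List ℕ → List ℕ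
  | [] => []
  | x :: l => if x = m then addHead m (fromM m l) else x :: fromM m l

lemma toM_nil (m : ℕ) : toM m [] = [] := rfl

lemma toM_cons (m x : ℕ) (c : List ℕ) :
    toM m (x :: c) = (List.replicate (x / m) m ++ [x % m]) ++ toM m c := by
  simp [toM]

lemma toM_ne_nil (m x : ℕ) (c : List ℕ) : toM m (x :: c) ≠ [] := by
  simp [toM_cons]

lemma fromM_block (m : ℕ) (hm : 0 < m) (k r : ℕ) (hr : r ≠ m) (l : List ℕ) :
    fromM m (List.replicate k m ++ r :: l) = (k * m + r) :: fromM m l := by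
  induction k with
  | zero => simp [fromM, hr]
  | succ k ih =>
      rw [List.replicate_succ, List.cons_append]
      simp only [fromM, if_pos rfl, ih, addHead]
      simp only [ite_true, eq_self_iff_true]
      congr 1
      ring

lemma fromM_toM (m : ℕ) (hm : 0 < m) (c : List ℕ) : fromM m (toM m c) = c := by
  induction c with
  | nil => rfl
  | cons x c ih =>
      rw [toM_cons, List.append_assoc, List.singleton_append,
        fromM_block m hm _ _ (Nat.ne_of_lt (Nat.mod_lt x hm)), ih]
      congr 1
      rw [mul_comm]
      exact Nat.div_add_mod x m

lemma toM_sum (m : ℕ) (hm : 0 < m) (c : List ℕ) : (toM m c).sum = c.sum := by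
  induction c with
  | nil => rfl
  | cons x c ih =>
      rw [toM_cons, List.sum_append, ih, List.sum_append, List.sum_singleton,
        List.sum_replicate, List.sum_cons, smul_eq_mul, mul_comm]
      rw [Nat.div_add_mod x m]

lemma toM_mem (m : ℕ) (c : List ℕ) (y : ℕ) (hy : y ∈ toM m c) :
    y = m ∨ ∃ x ∈ c, y = x % m := by
  induction c with
  | nil => simp [toM] at hy
  | cons x c ih =>
      rw [toM_cons, List.mem_append, List.mem_append] at hy
      rcases hy with (h | h) | h
      · exact Or.inl (List.eq_of_mem_replicate h)
      · exact Or.inr ⟨x, List.mem_cons_self, (List.mem_singleton.mp h)⟩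
      · rcases ih h with h' | ⟨z, hz, hz'⟩
        · exact Or.inl h'
        · exact Or.inr ⟨z, List.mem_cons_of_mem _ hz, hz'⟩

lemma toM_getLast (m : ℕ) (c : List ℕ) (y : ℕ) (hy : (toM m c).getLast? = some y) :
    ∃ x ∈ c, y = x % m := by
  induction c with
  | nil => simp [toM] at hy
  | cons x c ih =>
      cases c with
      | nil =>
          rw [toM_cons, toM_nil, List.append_nil, List.getLast?_concat] at hy
          exact ⟨x, List.mem_cons_self, (Option.some_inj.mp hy).symm⟩
      | cons z c' =>
          rw [toM_cons, List.getLast?_append_of_ne_nil _ (toM_ne_nil m z c')] at hy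
          rcases ih hy with ⟨w, hw, hw'⟩
          exact ⟨w, List.mem_cons_of_mem _ hw, hw'⟩

lemma fromM_ne_nil (m x : ℕ) (l : List ℕ) : fromM m (x :: l) ≠ [] := by
  by_cases h : x = m
  · simp only [fromM, if_pos h]
    cases fromM m l <;> simp [addHead]
  · simp [fromM, h]

lemma fromM_sum (m : ℕ) (l : List ℕ) : (fromM m l).sum = l.sum := by
  induction l with
  | nil => rfl
  | cons x l ih =>
      by_cases h : x = m
      · simp only [fromM, if_pos h]
        cases hl : fromM m l with
        | nil =>
            have : l.sum = 0 := by rw [← ih, hl]; rfl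
            simp [addHead, hl, this, h]
        | cons y t =>
            simp only [addHead, List.sum_cons, ← ih, hl, List.sum_cons, h]
            ring
      · simp [fromM, h, ih]

lemma fromM_mem_mod (m : ℕ) (hm : 2 ≤ m) (R : Finset ℕ)
    (hRsub : R ⊆ Finset.Icc 1 (m - 1)) (l : List ℕ)
    (hmem : ∀ x ∈ l, x ∈ R ∨ x = m) (hlast : ∀ x : ℕ, l.getLast? = some x → x ∈ R) :
    ∀ y ∈ fromM m l, y % m ∈ R := by
  have hRlt : ∀ x ∈ R, 1 ≤ x ∧ x ≤ m - 1 := fun x hx =>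
    Finset.mem_Icc.mp (hRsub hx)
  have hmR : m ∉ R := by
    intro h
    have := (hRlt m h).2
    omega
  induction l with
  | nil => intro y hy; simp [fromM] at hy
  | cons x l ih =>
      have hlast' : l ≠ [] → ∀ x : ℕ, l.getLast? = some x → x ∈ R := by
        intro hne z hz
        apply hlast
        cases l with
        | nil => exact absurd rfl hne
        | cons a b => rw [List.getLast?_cons_cons]; exact hz
      by_cases h : x = m
      · have hlne : l ≠ [] := by
          rintro rfl
          exact hmR (h ▸ hlast x rfl)
        intro y hy
        simp only [fromM, if_pos h] at hy
        cases l with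
        | nil => exact absurd rfl hlne
        | cons a b =>
            have ih' := ih (fun z hz => hmem z (List.mem_cons_of_mem _ hz))
              (hlast' hlne)
            cases hf : fromM m (a :: b) with
            | nil => exact absurd hf (fromM_ne_nil m a b)
            | cons y0 t0 =>
                rw [hf] at hy
                simp only [addHead, List.mem_cons] at hy
                rcases hy with rfl | hy
                · have := ih' y0 (by rw [hf]; exact List.mem_cons_self)
                  rwa [Nat.add_mod_left]
                  
                · exact ih' y (by rw [hf]; exact List.mem_cons_of_mem _ hy)
      · have hxR : x ∈ R := (hmem x (List.mem_cons_self)).resolve_right h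
        intro y hy
        simp only [fromM, if_neg h, List.mem_cons] at hy
        rcases hy with rfl | hy
        · have := hRlt y hxR
          rwa [Nat.mod_eq_of_lt (by omega)]
        · cases l with
          | nil => simp [fromM] at hy
          | cons a b =>
              exact ih (fun z hz => hmem z (List.mem_cons_of_mem _ hz))
                (hlast' (by simp)) y hy

lemma toM_fromM (m : ℕ) (hm : 2 ≤ m) (R : Finset ℕ)
    (hRsub : R ⊆ Finset.Icc 1 (m - 1)) (l : List ℕ)
    (hmem : ∀ x ∈ l, x ∈ R ∨ x = m) (hlast : ∀ x : ℕ, l.getLast? = some x → x ∈ R) :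
    toM m (fromM m l) = l := by
  have hRlt : ∀ x ∈ R, 1 ≤ x ∧ x ≤ m - 1 := fun x hx =>
    Finset.mem_Icc.mp (hRsub hx)
  have hmR : m ∉ R := by
    intro h; have := (hRlt m h).2; omega
  induction l with
  | nil => rfl
  | cons x l ih =>
      have hlast' : l ≠ [] → ∀ x : ℕ, l.getLast? = some x → x ∈ R := by
        intro hne z hz
        apply hlast
        cases l with
        | nil => exact absurd rfl hne
        | cons a b => rw [List.getLast?_cons_cons]; exact hz
      have ihl : l ≠ [] → toM m (fromM m l) = l := by
        intro hne
        exact ih (fun z hz => hmem z (List.mem_cons_of_mem _ hz)) (hlast' hne)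
      by_cases h : x = m
      · have hlne : l ≠ [] := by
          rintro rfl
          exact hmR (h ▸ hlast x rfl)
        rw [h]
        simp only [fromM, if_pos rfl]
        obtain ⟨a, b, rfl⟩ := List.exists_cons_of_ne_nil hlne
        cases hf : fromM m (a :: b) with
        | nil => exact absurd hf (fromM_ne_nil m a b)
        | cons y0 t0 =>
            have key : toM m (y0 :: t0) = a :: b := by
              rw [← hf]; exact ihl (by simp)
            simp only [addHead, if_true]
            rw [toM_cons] at key ⊢
            have hdiv : (m + y0) / m = y0 / m + 1 := by
              rw [add_comm m y0, Nat.add_div_right _ (by omega)]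
            have hmod : (m + y0) % m = y0 % m := Nat.add_mod_left m y0
            rw [hdiv, hmod, List.replicate_succ, List.cons_append, List.cons_append,
              key]
      · have hxR : x ∈ R := (hmem x (List.mem_cons_self)).resolve_right h
        have hxlt : x < m := by have := hRlt x hxR; omega
        simp only [fromM, if_neg h]
        rw [toM_cons, Nat.div_eq_of_lt hxlt, Nat.mod_eq_of_lt hxlt]
        simp only [List.replicate_zero, List.nil_append, List.singleton_append]
        cases l with
        | nil => rfl
        | cons a b => rw [ihl (by simp)]

theorem congruence_lemma (m n : ℕ) (hm : 2 ≤ m) (hn : 1 ≤ n)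
    (R : Finset ℕ) (hR : R.Nonempty) (hRsub : R ⊆ Finset.Icc 1 (m - 1)) :
    Nat.card {c : List ℕ // IsComposition n c ∧ ∀ x ∈ c, x % m ∈ R} =
    Nat.card {c : List ℕ // IsComposition n c ∧ (∀ x ∈ c, x ∈ R ∨ x = m) ∧
      ∀ x : ℕ, c.getLast? = some x → x ∈ R} := by
  have hm0 : 0 < m := by omega
  have hRlt : ∀ x ∈ R, 1 ≤ x ∧ x ≤ m - 1 := fun x hx =>
    Finset.mem_Icc.mp (hRsub hx)
  refine Nat.card_congr ?_
  refine
    { toFun := fun c => ⟨toM m c.1, ?_, ?_, ?_⟩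
      invFun := fun d => ⟨fromM m d.1, ?_, ?_⟩
      left_inv := ?_
      right_inv := ?_ }
  · -- toM is a composition
    obtain ⟨c, ⟨hpos, hsum⟩, hmod⟩ := c
    constructor
    · intro y hy
      rcases toM_mem m c y hy with rfl | ⟨x, hx, rfl⟩
      · exact hm0
      · have := hRlt _ (hmod x hx); omega
    · rw [toM_sum m hm0, hsum]
  · -- membership R ∪ {m}
    obtain ⟨c, ⟨hpos, hsum⟩, hmod⟩ := c
    intro y hy
    rcases toM_mem m c y hy with rfl | ⟨x, hx, rfl⟩
    · exact Or.inr rfl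
    · exact Or.inl (hmod x hx)
  · -- last in R
    obtain ⟨c, ⟨hpos, hsum⟩, hmod⟩ := c
    intro y hy
    obtain ⟨x, hx, rfl⟩ := toM_getLast m c y hy
    exact hmod x hx
  · -- fromM is a composition
    obtain ⟨d, ⟨hpos, hsum⟩, hmem, hlast⟩ := d
    have hmm := fromM_mem_mod m hm R hRsub d hmem hlast
    constructor
    · intro y hy
      have := hRlt _ (hmm y hy)
      have := Nat.mod_le y m
      omega
    · rw [fromM_sum, hsum]
  · -- fromM parts mod in R
    obtain ⟨d, ⟨hpos, hsum⟩, hmem, hlast⟩ := d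
    exact fromM_mem_mod m hm R hRsub d hmem hlast
  · rintro ⟨c, hc⟩
    exact Subtype.ext (fromM_toM m hm0 c)
  · rintro ⟨d, hd⟩
    exact Subtype.ext (toM_fromM m hm R hRsub d hd.2.1 hd.2.2)
end

section
/- The map sending a composition c = (c₁, …, c_ℓ) of n to the sequence λ with λᵢ = 1 + Σ_{j=i}^{ℓ} (c_j − 1) is a bijection between compositions of n and partitions with perimeter n, and it preserves the number of parts: ℓ(λ) = ℓ(c). -/
/-- The map π sending a composition to a partition: λᵢ = 1 + Σ_{j=i}^{ℓ} (c_j − 1). -/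
def piMap (c : List ℕ) : List ℕ :=
  (List.range c.length).map (fun i => 1 + ((c.drop i).map (· - 1)).sum)

lemma piMap_nil : piMap [] = [] := by simp [piMap]

lemma piMap_cons (a : ℕ) (t : List ℕ) :
    piMap (a :: t) = (a - 1 + (1 + (t.map (· - 1)).sum)) :: piMap t := by
  simp [piMap, List.range_succ_eq_map, List.map_map, Function.comp]
  omega

lemma piMap_length (c : List ℕ) : (piMap c).length = c.length := by simp [piMap]

lemma sum_map_sub (c : List ℕ) (h : ∀ x ∈ c, 0 < x) :
    (c.map (· - 1)).sum + c.length = c.sum := by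
  induction c with
  | nil => simp
  | cons a t ih =>
    have ha := h a (by simp)
    have := ih (fun x hx => h x (by simp [hx]))
    simp only [List.map_cons, List.sum_cons, List.length_cons]
    omega

lemma mem_piMap (c : List ℕ) (x : ℕ) (hx : x ∈ piMap c) :
    ∃ i, x = 1 + ((c.map (· - 1)).drop i).sum := by
  simp [piMap] at hx
  obtain ⟨i, _, h⟩ := hx
  exact ⟨i, h.symm⟩

lemma piMap_pos (c : List ℕ) : ∀ x ∈ piMap c, 0 < x := by
  intro x hx
  obtain ⟨i, h⟩ := mem_piMap c x hx
  omega

lemma drop_sum_le (l : List ℕ) (i : ℕ) : (l.drop i).sum ≤ l.sum := by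
  conv_rhs => rw [← List.take_append_drop i l]
  rw [List.sum_append]
  omega

lemma piMap_sorted (c : List ℕ) : (piMap c).Pairwise (· ≥ ·) := by
  induction c with
  | nil => simp [piMap_nil]
  | cons a t ih =>
    rw [piMap_cons, List.pairwise_cons]
    refine ⟨?_, ih⟩
    intro b hb
    obtain ⟨i, rfl⟩ := mem_piMap t b hb
    have := drop_sum_le (t.map (· - 1)) i
    omega

lemma perimeter_piMap (c : List ℕ) (hne : c ≠ []) (hpos : ∀ x ∈ c, 0 < x) :
    perimeter (piMap c) = c.sum := by
  obtain ⟨a, t, rfl⟩ := List.exists_cons_of_ne_nil hne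
  have ha := hpos a (by simp)
  have ht := sum_map_sub t (fun x hx => hpos x (by simp [hx]))
  rw [piMap_cons]
  simp only [perimeter, List.headI_cons, List.length_cons, piMap_length, List.sum_cons]
  omega

lemma piMap_headI (c : List ℕ) (hne : c ≠ []) :
    (piMap c).headI = 1 + (c.map (· - 1)).sum := by
  obtain ⟨a, t, rfl⟩ := List.exists_cons_of_ne_nil hne
  rw [piMap_cons]
  simp
  omega

lemma piMap_inj : ∀ c c' : List ℕ, (∀ x ∈ c, 0 < x) → (∀ x ∈ c', 0 < x) →
    piMap c = piMap c' → c = c' := by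
  intro c
  induction c with
  | nil =>
    intro c' _ _ h
    cases c' with
    | nil => rfl
    | cons a t => rw [piMap_nil, piMap_cons] at h; exact absurd h (by simp)
  | cons a t ih =>
    intro c' hc hc' h
    cases c' with
    | nil => rw [piMap_nil, piMap_cons] at h; exact absurd h (by simp)
    | cons b s =>
      rw [piMap_cons, piMap_cons] at h
      obtain ⟨h1, h2⟩ := List.cons.injEq .. ▸ h
      have hts : t = s := ih s (fun x hx => hc x (by simp [hx]))
        (fun x hx => hc' x (by simp [hx])) h2
      subst hts
      have ha := hc a (by simp)
      have hb := hc' b (by simp)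
      have : a = b := by omega
      rw [this]

def invMap : List ℕ → List ℕ
  | [] => []
  | [a] => [a]
  | a :: b :: t => (a - b + 1) :: invMap (b :: t)

lemma invMap_spec : ∀ l : List ℕ, (∀ x ∈ l, 0 < x) → l.Pairwise (· ≥ ·) →
    piMap (invMap l) = l ∧ (∀ x ∈ invMap l, 0 < x) := by
  intro l
  induction l with
  | nil => intro _ _; exact ⟨piMap_nil, by simp [invMap]⟩
  | cons a t ih =>
    intro hpos hsort
    cases t with
    | nil =>
      have ha := hpos a (by simp)
      refine ⟨?_, by simp [invMap]; omega⟩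
      show piMap [a] = [a]
      rw [show ([a] : List ℕ) = a :: [] from rfl, piMap_cons, piMap_nil]
      simp
      omega
    | cons b s =>
      rw [List.pairwise_cons] at hsort
      have hab : b ≤ a := hsort.1 b (by simp)
      have hb := hpos b (by simp)
      have ih' := ih (fun x hx => hpos x (by simp [hx])) hsort.2
      obtain ⟨hpi, hposinv⟩ := ih'
      have hne : invMap (b :: s) ≠ [] := by
        intro h
        rw [h, piMap_nil] at hpi
        exact absurd hpi (by simp)
      constructor
      · show piMap ((a - b + 1) :: invMap (b :: s)) = a :: b :: s
        rw [piMap_cons, hpi]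
        have hh := piMap_headI (invMap (b :: s)) hne
        rw [hpi] at hh
        simp at hh
        congr 1
        omega
      · intro x hx
        rw [show invMap (a :: b :: s) = (a - b + 1) :: invMap (b :: s) from rfl] at hx
        rcases List.mem_cons.mp hx with rfl | hx
        · omega
        · exact hposinv x hx

theorem piMap_bijection (n : ℕ) (hn : 1 ≤ n) :
    Set.BijOn piMap {c : List ℕ | IsComposition n c}
      {l : List ℕ | IsPartition l ∧ perimeter l = n} ∧
    ∀ c : List ℕ, IsComposition n c → (piMap c).length = c.length := by
  refine ⟨⟨?_, ?_, ?_⟩, fun c _ => piMap_length c⟩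
  · rintro c ⟨hpos, hsum⟩
    have hne : c ≠ [] := by rintro rfl; simp at hsum; omega
    exact ⟨⟨piMap_pos c, piMap_sorted c⟩, by rw [perimeter_piMap c hne hpos, hsum]⟩
  · rintro c ⟨hc, _⟩ c' ⟨hc', _⟩ h
    exact piMap_inj c c' hc hc' h
  · rintro l ⟨⟨hpos, hsort⟩, hper⟩
    obtain ⟨hpi, hposinv⟩ := invMap_spec l hpos hsort
    have hlne : l ≠ [] := by rintro rfl; simp [perimeter] at hper; omega
    have hne : invMap l ≠ [] := by
      intro h; rw [h, piMap_nil] at hpi; exact hlne hpi.symm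
    refine ⟨invMap l, ⟨hposinv, ?_⟩, hpi⟩
    have := perimeter_piMap (invMap l) hne hposinv
    rw [hpi, hper] at this
    omega
end

section
/- For every k ≥ 1, the number of partitions with perimeter exactly k is 2^{k−1}. -/
/-- Forward map: strip a unit from the partition. -/
def pF (l : List ℕ) : Bool × List ℕ :=
  if l.tail.headI < l.headI then (true, (l.headI - 1) :: l.tail) else (false, l.tail)

/-- Inverse map. -/
def pG (b : Bool) (m : List ℕ) : List ℕ :=
  if b then (m.headI + 1) :: m.tail else m.headI :: m

lemma head_max {l : List ℕ} (h : l.Pairwise (· ≥ ·)) : ∀ x ∈ l, x ≤ l.headI := by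
  cases l with
  | nil => simp
  | cons a t =>
    rw [List.pairwise_cons] at h
    intro x hx
    rcases List.mem_cons.1 hx with rfl | hx
    · simp
    · exact h.1 x hx

lemma part_ne_nil {l : List ℕ} {n : ℕ} (h : perimeter l = n) (hn : 1 ≤ n) : l ≠ [] := by
  rintro rfl
  simp [perimeter] at h
  omega

lemma pF_spec {l : List ℕ} {n : ℕ} (hn : 1 ≤ n)
    (h : IsPartition l ∧ perimeter l = n + 1) :
    IsPartition (pF l).2 ∧ perimeter (pF l).2 = n := by
  obtain ⟨⟨hpos, hs⟩, hp⟩ := h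
  obtain ⟨a, t, rfl⟩ := List.exists_cons_of_ne_nil (part_ne_nil hp (by omega))
  have ha : 0 < a := hpos a (by simp)
  have hper : a + t.length = n + 1 := by
    simp [perimeter] at hp; omega
  rw [List.pairwise_cons] at hs
  unfold pF
  simp only [List.tail_cons, List.headI_cons]
  by_cases hcase : t.headI < a
  · simp only [hcase, if_true]
    have ha2 : 2 ≤ a := by
      cases t with
      | nil => simp at hper; omega
      | cons b s =>
        have := hpos b (by simp)
        simp at hcase; omega
    refine ⟨⟨?_, ?_⟩, ?_⟩
    · intro x hx
      rcases List.mem_cons.1 hx with rfl | hx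
      · omega
      · exact hpos x (by simp [hx])
    · rw [List.pairwise_cons]
      refine ⟨fun b hb => ?_, hs.2⟩
      have := head_max hs.2 b hb
      omega
    · simp [perimeter]
      omega
  · simp only [hcase, if_false]
    have htne : t ≠ [] := by
      rintro rfl
      simp at hcase
      omega
    have hth : t.headI = a := by
      obtain ⟨b, s, rfl⟩ := List.exists_cons_of_ne_nil htne
      have := hs.1 b (by simp)
      simp at hcase ⊢
      omega
    refine ⟨⟨fun x hx => hpos x (by simp [hx]), hs.2⟩, ?_⟩
    have h1 : 1 ≤ t.length := List.length_pos_iff.2 htne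
    simp [perimeter]
    omega

lemma pG_spec {m : List ℕ} {n : ℕ} (b : Bool) (hn : 1 ≤ n)
    (h : IsPartition m ∧ perimeter m = n) :
    IsPartition (pG b m) ∧ perimeter (pG b m) = n + 1 := by
  obtain ⟨⟨hpos, hs⟩, hp⟩ := h
  obtain ⟨a, t, rfl⟩ := List.exists_cons_of_ne_nil (part_ne_nil hp hn)
  have ha : 0 < a := hpos a (by simp)
  have hper : a + t.length = n := by
    simp [perimeter] at hp; omega
  rw [List.pairwise_cons] at hs
  cases b
  · show IsPartition (a :: a :: t) ∧ perimeter (a :: a :: t) = n + 1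
    refine ⟨⟨?_, ?_⟩, ?_⟩
    · intro x hx
      rcases List.mem_cons.1 hx with rfl | hx
      · exact ha
      · exact hpos x hx
    · rw [List.pairwise_cons]
      refine ⟨?_, List.pairwise_cons.2 hs⟩
      intro x hx
      rcases List.mem_cons.1 hx with rfl | hx
      · simp
      · exact hs.1 x hx
    · simp [perimeter]
      omega
  · show IsPartition ((a + 1) :: t) ∧ perimeter ((a + 1) :: t) = n + 1
    refine ⟨⟨?_, ?_⟩, ?_⟩
    · intro x hx
      rcases List.mem_cons.1 hx with rfl | hx
      · omega
      · exact hpos x (by simp [hx])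
    · rw [List.pairwise_cons]
      refine ⟨fun x hx => ?_, hs.2⟩
      have := hs.1 x hx
      omega
    · simp [perimeter]
      omega

lemma pGF {l : List ℕ} {n : ℕ} (hn : 1 ≤ n)
    (h : IsPartition l ∧ perimeter l = n + 1) :
    pG (pF l).1 (pF l).2 = l := by
  obtain ⟨⟨hpos, hs⟩, hp⟩ := h
  obtain ⟨a, t, rfl⟩ := List.exists_cons_of_ne_nil (part_ne_nil hp (by omega))
  have ha : 0 < a := hpos a (by simp)
  rw [List.pairwise_cons] at hs
  unfold pF
  simp only [List.tail_cons, List.headI_cons]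
  by_cases hcase : t.headI < a
  · simp only [hcase, if_true]
    show (a - 1 + 1) :: t = a :: t
    congr 1
    omega
  · simp only [hcase, if_false]
    show t.headI :: t = a :: t
    have htne : t ≠ [] := by
      rintro rfl; simp at hcase; omega
    obtain ⟨b, s, rfl⟩ := List.exists_cons_of_ne_nil htne
    have := hs.1 b (by simp)
    simp at hcase ⊢
    omega

lemma pFG {m : List ℕ} {n : ℕ} (b : Bool) (hn : 1 ≤ n)
    (h : IsPartition m ∧ perimeter m = n) :
    pF (pG b m) = (b, m) := by
  obtain ⟨⟨hpos, hs⟩, hp⟩ := h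
  obtain ⟨a, t, rfl⟩ := List.exists_cons_of_ne_nil (part_ne_nil hp hn)
  have ha : 0 < a := hpos a (by simp)
  rw [List.pairwise_cons] at hs
  have hta : t.headI ≤ a := by
    cases t with
    | nil => simp
    | cons b s => exact hs.1 b (by simp)
  cases b
  · show pF (a :: a :: t) = (false, a :: t)
    unfold pF
    simp
  · show pF ((a + 1) :: t) = (true, a :: t)
    unfold pF
    simp only [List.tail_cons, List.headI_cons]
    simp only [show t.headI < a + 1 by omega, if_true]
    simp

theorem count_by_perimeter (k : ℕ) (hk : 1 ≤ k) :
    Nat.card {l : List ℕ // IsPartition l ∧ perimeter l = k} = 2 ^ (k - 1) := by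
  induction k, hk using Nat.le_induction with
  | base =>
    have h : ∀ l : List ℕ, (IsPartition l ∧ perimeter l = 1) ↔ l = [1] := by
      intro l
      constructor
      · rintro ⟨⟨hpos, hs⟩, hp⟩
        match l with
        | [] => simp [perimeter] at hp
        | [a] =>
          have h1 := hpos a (by simp)
          have h2 : a = 1 := by simp [perimeter] at hp; omega
          rw [h2]
        | a :: b :: t =>
          have := hpos a (by simp)
          simp [perimeter] at hp
          omega
      · rintro rfl
        exact ⟨⟨by simp, by simp⟩, rfl⟩
    simp_rw [h]
    simp
  | succ n hn ih =>
    have e : {l : List ℕ // IsPartition l ∧ perimeter l = n + 1} ≃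
        Bool × {l : List ℕ // IsPartition l ∧ perimeter l = n} :=
      { toFun := fun x => ((pF x.1).1, ⟨(pF x.1).2, pF_spec hn x.2⟩)
        invFun := fun p => ⟨pG p.1 p.2.1, pG_spec p.1 hn p.2.2⟩
        left_inv := fun x => Subtype.ext (pGF hn x.2)
        right_inv := fun p => by
          have h := pFG p.1 hn p.2.2
          rw [Prod.ext_iff] at h
          exact Prod.ext h.1 (Subtype.ext h.2) }
    rw [Nat.card_congr e, Nat.card_prod, ih]
    simp only [Nat.card_eq_fintype_card, Fintype.card_bool, Nat.add_sub_cancel]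
    rw [← pow_succ']
    congr 1
    omega
end

section
/- For all n ≥ 1, the number of compositions of n with all parts odd equals the number of compositions of n with all parts in {1, 2} and last part equal to 1. -/
namespace OddOneTwo

/-- Encode: each odd part `2m+1` becomes `m` twos followed by a one. -/
def enc (c : List ℕ) : List ℕ := c.flatMap (fun a => List.replicate (a / 2) 2 ++ [1])

/-- Decode: group runs of twos terminated by a one. -/
def dec : List ℕ → List ℕ
  | [] => []
  | 1 :: rest => 1 :: dec rest
  | _ :: rest =>
    match dec rest with
    | [] => []
    | a :: t => (a + 2) :: t

@[simp] lemma enc_nil : enc [] = [] := rfl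

lemma enc_cons (a : ℕ) (c : List ℕ) :
    enc (a :: c) = List.replicate (a / 2) 2 ++ 1 :: enc c := by
  simp [enc]

lemma dec_aux (m : ℕ) (l : List ℕ) :
    dec (List.replicate m 2 ++ 1 :: l) = (2 * m + 1) :: dec l := by
  induction m with
  | zero => simp [dec]
  | succ k ih =>
      rw [List.replicate_succ, List.cons_append]
      show dec (2 :: (List.replicate k 2 ++ 1 :: l)) = _
      rw [show dec (2 :: (List.replicate k 2 ++ 1 :: l)) =
        match dec (List.replicate k 2 ++ 1 :: l) with
        | [] => []
        | a :: t => (a + 2) :: t from rfl, ih]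
      ring_nf

lemma dec_enc (c : List ℕ) (h : ∀ x ∈ c, Odd x) : dec (enc c) = c := by
  induction c with
  | nil => rfl
  | cons a c ih =>
      rw [enc_cons, dec_aux, ih (fun x hx => h x (List.mem_cons_of_mem _ hx))]
      have ha : a % 2 = 1 := Nat.odd_iff.mp (h a (List.mem_cons_self))
      have := Nat.div_add_mod a 2
      congr 1
      omega

lemma enc_ne_nil (a : ℕ) (c : List ℕ) : enc (a :: c) ≠ [] := by
  rw [enc_cons]
  intro h
  have : (1 : ℕ) ∈ ([] : List ℕ) := by
    rw [← h]; exact List.mem_append_right _ (List.mem_cons_self)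
  simp at this

lemma enc_dec (d : List ℕ) (h12 : ∀ x ∈ d, x = 1 ∨ x = 2)
    (hl : d.getLast? = some 1) : enc (dec d) = d := by
  induction d with
  | nil => simp at hl
  | cons x rest ih =>
      rcases h12 x (List.mem_cons_self) with hx | hx
      · subst hx
        cases rest with
        | nil => rfl
        | cons y t =>
            have hl' : (y :: t).getLast? = some 1 := by
              rwa [List.getLast?_cons_cons] at hl
            have ih' := ih (fun z hz => h12 z (List.mem_cons_of_mem _ hz)) hl'
            show enc (1 :: dec (y :: t)) = _
            rw [enc_cons, ih']
            rfl
      · subst hx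
        cases rest with
        | nil => simp at hl
        | cons y t =>
            have hl' : (y :: t).getLast? = some 1 := by
              rwa [List.getLast?_cons_cons] at hl
            have ih' := ih (fun z hz => h12 z (List.mem_cons_of_mem _ hz)) hl'
            have hne : dec (y :: t) ≠ [] := by
              intro h0
              rw [h0] at ih'
              exact List.cons_ne_nil y t ih'.symm
            obtain ⟨a, s, has⟩ := List.exists_cons_of_ne_nil hne
            show enc (match dec (y :: t) with
              | [] => []
              | a :: t => (a + 2) :: t) = _
            rw [has]
            rw [has] at ih'
            show enc ((a + 2) :: s) = _
            rw [enc_cons]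
            have : (a + 2) / 2 = a / 2 + 1 := by omega
            rw [this, List.replicate_succ, List.cons_append, ← enc_cons, ih']

lemma enc_sum (c : List ℕ) (h : ∀ x ∈ c, Odd x) : (enc c).sum = c.sum := by
  induction c with
  | nil => rfl
  | cons a c ih =>
      rw [enc_cons, List.sum_append, List.sum_cons,
        ih (fun x hx => h x (List.mem_cons_of_mem _ hx)), List.sum_replicate,
        List.sum_cons]
      have ha : a % 2 = 1 := Nat.odd_iff.mp (h a (List.mem_cons_self))
      have := Nat.div_add_mod a 2
      simp only [smul_eq_mul]
      omega

lemma enc_mem (c : List ℕ) (x : ℕ) (hx : x ∈ enc c) : x = 1 ∨ x = 2 := by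
  simp only [enc, List.mem_flatMap, List.mem_append, List.mem_replicate,
    List.mem_singleton] at hx
  obtain ⟨a, -, h | h⟩ := hx
  · exact Or.inr h.2
  · exact Or.inl h

lemma enc_last (c : List ℕ) (hc : c ≠ []) : (enc c).getLast? = some 1 := by
  induction c with
  | nil => exact absurd rfl hc
  | cons a c ih =>
      rw [enc_cons]
      cases c with
      | nil =>
          show (List.replicate (a / 2) 2 ++ [1]).getLast? = some 1
          rw [List.getLast?_concat]
      | cons b t =>
          rw [show (1 : ℕ) :: enc (b :: t) = [1] ++ enc (b :: t) from rfl,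
            ← List.append_assoc,
            List.getLast?_append_of_ne_nil _ (enc_ne_nil b t)]
          exact ih (List.cons_ne_nil b t)

lemma dec_odd (d : List ℕ) : ∀ x ∈ dec d, Odd x := by
  induction d with
  | nil => simp [dec]
  | cons y rest ih =>
      by_cases hy : y = 1
      · subst hy
        intro x hx
        rw [show dec (1 :: rest) = 1 :: dec rest from rfl] at hx
        rcases List.mem_cons.mp hx with h | h
        · exact h ▸ odd_one
        · exact ih x h
      · intro x hx
        have : dec (y :: rest) =
            match dec rest with
            | [] => []
            | a :: t => (a + 2) :: t := by
          cases y with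
          | zero => rfl
          | succ k => cases k with
            | zero => exact absurd rfl hy
            | succ m => rfl
        rw [this] at hx
        cases hd : dec rest with
        | nil => rw [hd] at hx; simp at hx
        | cons a t =>
            rw [hd] at hx
            rcases List.mem_cons.mp hx with h | h
            · subst h
              obtain ⟨k, hk⟩ := ih a (hd ▸ List.mem_cons_self)
              exact ⟨k + 1, by omega⟩
            · exact ih x (hd ▸ List.mem_cons_of_mem _ h)

end OddOneTwo

theorem odd_eq_one_two (n : ℕ) (hn : 1 ≤ n) :
    Nat.card {c : List ℕ // IsComposition n c ∧ ∀ x ∈ c, Odd x} =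
    Nat.card {c : List ℕ // IsComposition n c ∧ (∀ x ∈ c, x = 1 ∨ x = 2) ∧
      c.getLast? = some 1} := by
  apply Nat.card_congr
  refine
    { toFun := fun c => ⟨OddOneTwo.enc c.1, ?_⟩
      invFun := fun d => ⟨OddOneTwo.dec d.1, ?_⟩
      left_inv := fun c => Subtype.ext (OddOneTwo.dec_enc c.1 c.2.2)
      right_inv := fun d => Subtype.ext (OddOneTwo.enc_dec d.1 d.2.2.1 d.2.2.2) }
  · obtain ⟨c, ⟨hpos, hsum⟩, hodd⟩ := c
    have hne : c ≠ [] := by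
      rintro rfl; simp at hsum; omega
    refine ⟨⟨fun x hx => ?_, ?_⟩, fun x hx => OddOneTwo.enc_mem c x hx, ?_⟩
    · rcases OddOneTwo.enc_mem c x hx with h | h <;> omega
    · rw [OddOneTwo.enc_sum c hodd, hsum]
    · exact OddOneTwo.enc_last c hne
  · obtain ⟨d, ⟨hpos, hsum⟩, h12, hl⟩ := d
    have key : OddOneTwo.enc (OddOneTwo.dec d) = d := OddOneTwo.enc_dec d h12 hl
    refine ⟨⟨fun x hx => ?_, ?_⟩, OddOneTwo.dec_odd d⟩
    · obtain ⟨k, hk⟩ := OddOneTwo.dec_odd d x hx; omega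
    · show (OddOneTwo.dec d).sum = n
      rw [← OddOneTwo.enc_sum _ (OddOneTwo.dec_odd d), key, hsum]
end

section
/- For all m ≥ 2 and n ≥ 1, the number of compositions c of n such that 1 + Σ_{j=i}^{ℓ(c)} (c_j − 1) is not divisible by m for every index 1 ≤ i ≤ ℓ(c) equals the number of partitions with perimeter n having no part divisible by m. -/
/-- The suffix-sum partition associated to a composition. -/
def toPart : List ℕ → List ℕ
  | [] => []
  | a :: t => (1 + ((a :: t).map (· - 1)).sum) :: toPart t

/-- The composition of successive differences associated to a partition. -/
def toComp : List ℕ → List ℕ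
  | [] => []
  | [a] => [a]
  | a :: b :: t => (a + 1 - b) :: toComp (b :: t)

theorem mem_toPart {x : ℕ} : ∀ {c : List ℕ},
    x ∈ toPart c ↔ ∃ i, i < c.length ∧ x = 1 + ((c.drop i).map (· - 1)).sum
  | [] => by simp [toPart]
  | a :: t => by
    simp only [toPart, List.mem_cons, mem_toPart (c := t)]
    constructor
    · rintro (rfl | ⟨i, hi, rfl⟩)
      · exact ⟨0, by simp⟩
      · exact ⟨i + 1, by simpa using hi, by simp⟩
    · rintro ⟨i, hi, rfl⟩
      cases i with
      | zero => exact Or.inl (by simp)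
      | succ j => exact Or.inr ⟨j, by simpa using hi, by simp⟩

theorem toPart_length : ∀ c : List ℕ, (toPart c).length = c.length
  | [] => rfl
  | a :: t => by simp [toPart, toPart_length t]

theorem toPart_sorted : ∀ c : List ℕ, (toPart c).Pairwise (· ≥ ·)
  | [] => List.Pairwise.nil
  | a :: t => by
    rw [toPart, List.pairwise_cons]
    refine ⟨?_, toPart_sorted t⟩
    intro b hb
    rw [mem_toPart] at hb
    obtain ⟨i, hi, rfl⟩ := hb
    have hsub : ((t.drop i).map (· - 1)).Sublist ((a :: t).map (· - 1)) :=
      ((t.drop_sublist i).trans (List.sublist_cons_self a t)).map _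
    have := hsub.sum_le_sum (by intro x _; exact Nat.zero_le x)
    omega

theorem sum_map_pred : ∀ (c : List ℕ), (∀ x ∈ c, 0 < x) →
    (c.map (· - 1)).sum + c.length = c.sum
  | [], _ => rfl
  | a :: t, h => by
    have ha : 0 < a := h a (by simp)
    have := sum_map_pred t (fun x hx => h x (by simp [hx]))
    simp only [List.map_cons, List.sum_cons, List.length_cons]
    omega

theorem length_le_sum : ∀ (c : List ℕ), (∀ x ∈ c, 0 < x) → c.length ≤ c.sum
  | [], _ => le_refl 0
  | a :: t, h => by
    have ha : 0 < a := h a (by simp)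
    have := length_le_sum t (fun x hx => h x (by simp [hx]))
    simp only [List.length_cons, List.sum_cons]
    omega

theorem toPart_headI {a : ℕ} {t : List ℕ} (h : ∀ x ∈ a :: t, 0 < x) :
    (toPart (a :: t)).headI + (a :: t).length = (a :: t).sum + 1 := by
  have := sum_map_pred (a :: t) h
  simp only [toPart, List.headI]
  omega

theorem toComp_sum : ∀ (l : List ℕ), l.Pairwise (· ≥ ·) → l ≠ [] →
    (toComp l).sum + 1 = l.headI + l.length
  | [], _, hne => absurd rfl hne
  | [a], _, _ => by simp [toComp]
  | a :: b :: t, h, _ => by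
    have hab : b ≤ a := (List.pairwise_cons.1 h).1 b (by simp)
    have ih := toComp_sum (b :: t) (List.pairwise_cons.1 h).2 (by simp)
    simp only [toComp, List.sum_cons, List.headI, List.length_cons] at *
    omega

theorem toComp_length : ∀ (l : List ℕ), (toComp l).length = l.length
  | [] => rfl
  | [a] => rfl
  | a :: b :: t => by simp [toComp, toComp_length (b :: t)]

theorem toComp_pos : ∀ (l : List ℕ), l.Pairwise (· ≥ ·) → (∀ x ∈ l, 0 < x) →
    ∀ x ∈ toComp l, 0 < x
  | [], _, _ => by simp [toComp]
  | [a], _, h => by simpa [toComp] using h a (by simp)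
  | a :: b :: t, hs, h => by
    have hab : b ≤ a := (List.pairwise_cons.1 hs).1 b (by simp)
    have ih := toComp_pos (b :: t) (List.pairwise_cons.1 hs).2
      (fun x hx => h x (by simp [List.mem_cons] at hx ⊢; tauto))
    intro x hx
    rw [toComp, List.mem_cons] at hx
    rcases hx with rfl | hx
    · omega
    · exact ih x hx

theorem toComp_toPart : ∀ (c : List ℕ), (∀ x ∈ c, 0 < x) → toComp (toPart c) = c
  | [], _ => rfl
  | [a], h => by
    have ha : 0 < a := h a (by simp)
    simp only [toPart, toComp, List.map_cons, List.map_nil, List.sum_cons, List.sum_nil]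
    congr 1
    omega
  | a :: b :: t, h => by
    have ha : 0 < a := h a (by simp)
    have ih := toComp_toPart (b :: t) (fun x hx => h x (by simp [List.mem_cons] at hx ⊢; tauto))
    show toComp ((1 + ((a :: b :: t).map (· - 1)).sum) :: (1 + ((b :: t).map (· - 1)).sum)
      :: toPart t) = a :: b :: t
    rw [toComp]
    have : toComp ((1 + ((b :: t).map (· - 1)).sum) :: toPart t) = b :: t := ih
    rw [this]
    congr 1
    simp only [List.map_cons, List.sum_cons]
    omega

theorem toPart_toComp : ∀ (l : List ℕ), l.Pairwise (· ≥ ·) → (∀ x ∈ l, 0 < x) →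
    toPart (toComp l) = l
  | [], _, _ => rfl
  | [a], _, h => by
    have ha : 0 < a := h a (by simp)
    simp only [toComp, toPart, List.map_cons, List.map_nil, List.sum_cons, List.sum_nil]
    congr 1
    omega
  | a :: b :: t, hs, h => by
    have hab : b ≤ a := (List.pairwise_cons.1 hs).1 b (by simp)
    have hb : 0 < b := h b (by simp)
    have hs' := (List.pairwise_cons.1 hs).2
    have hpos' : ∀ x ∈ b :: t, 0 < x := fun x hx => h x (by simp [List.mem_cons] at hx ⊢; tauto)
    have ih := toPart_toComp (b :: t) hs' hpos'
    have hcpos := toComp_pos (b :: t) hs' hpos'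
    have hcsum := toComp_sum (b :: t) hs' (by simp)
    have hclen := toComp_length (b :: t)
    have hmap := sum_map_pred (toComp (b :: t)) hcpos
    rw [toComp]
    cases hc : toComp (b :: t) with
    | nil => simp [hc] at hclen
    | cons y s =>
      rw [hc] at ih hcsum hclen hmap
      show (1 + (((a + 1 - b) :: y :: s).map (· - 1)).sum) :: toPart (y :: s) = a :: b :: t
      rw [show toPart (y :: s) = b :: t from ih]
      congr 1
      simp only [List.map_cons, List.sum_cons, List.length_cons, List.headI] at hmap hcsum hclen ⊢
      omega

theorem fwd (m n : ℕ) (hn : 1 ≤ n) (c : List ℕ)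
    (h : IsComposition n c ∧ ∀ i : ℕ, i < c.length →
      ¬ m ∣ (1 + ((c.drop i).map (· - 1)).sum)) :
    IsPartition (toPart c) ∧ perimeter (toPart c) = n ∧ ∀ x ∈ toPart c, ¬ m ∣ x := by
  obtain ⟨⟨hpos, hsum⟩, hdvd⟩ := h
  have hne : c ≠ [] := by
    rintro rfl
    simp at hsum
    omega
  refine ⟨⟨?_, toPart_sorted c⟩, ?_, ?_⟩
  · intro x hx
    rw [mem_toPart] at hx
    obtain ⟨i, _, rfl⟩ := hx
    omega
  · obtain ⟨a, t, rfl⟩ := List.exists_cons_of_ne_nil hne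
    have h1 := toPart_headI hpos
    have h2 := toPart_length (a :: t)
    unfold perimeter
    simp only [List.length_cons] at *
    omega
  · intro x hx
    rw [mem_toPart] at hx
    obtain ⟨i, hi, rfl⟩ := hx
    exact hdvd i hi

theorem bwd (m n : ℕ) (hn : 1 ≤ n) (l : List ℕ)
    (h : IsPartition l ∧ perimeter l = n ∧ ∀ x ∈ l, ¬ m ∣ x) :
    IsComposition n (toComp l) ∧ ∀ i : ℕ, i < (toComp l).length →
      ¬ m ∣ (1 + (((toComp l).drop i).map (· - 1)).sum) := by
  obtain ⟨⟨hpos, hsort⟩, hperi, hdvd⟩ := h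
  have hne : l ≠ [] := by
    rintro rfl
    simp [perimeter] at hperi
    omega
  have hcsum := toComp_sum l hsort hne
  have hh : 0 < l.headI := by
    obtain ⟨a, t, rfl⟩ := List.exists_cons_of_ne_nil hne
    exact hpos a (by simp)
  have hlen : 0 < l.length := List.length_pos_iff.2 hne
  refine ⟨⟨toComp_pos l hsort hpos, ?_⟩, ?_⟩
  · unfold perimeter at hperi
    omega
  · intro i hi
    have : (1 + (((toComp l).drop i).map (· - 1)).sum) ∈ toPart (toComp l) :=
      mem_toPart.2 ⟨i, hi, rfl⟩
    rw [toPart_toComp l hsort hpos] at this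
    exact hdvd _ this

theorem composition_partition_regular (m n : ℕ) (hm : 2 ≤ m) (hn : 1 ≤ n) :
    Nat.card {c : List ℕ // IsComposition n c ∧
      ∀ i : ℕ, i < c.length → ¬ m ∣ (1 + ((c.drop i).map (· - 1)).sum)} =
    Nat.card {l : List ℕ // IsPartition l ∧ perimeter l = n ∧ ∀ x ∈ l, ¬ m ∣ x} := by
  refine Nat.card_congr ⟨fun c => ⟨toPart c.1, fwd m n hn c.1 c.2⟩,
    fun l => ⟨toComp l.1, bwd m n hn l.1 l.2⟩, ?_, ?_⟩
  · rintro ⟨c, ⟨hpos, _⟩, _⟩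
    exact Subtype.ext (toComp_toPart c hpos)
  · rintro ⟨l, ⟨hpos, hsort⟩, _, _⟩
    exact Subtype.ext (toPart_toComp l hsort hpos)
end
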